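/- arXiv:2006.16814 — 7 statements merged into one kernel-verified Lean document; each statement's English description precedes it below -/
import Mathlib

section
/- Let A be a Banach algebra and B a Banach A-bimodule such that every continuous derivation D : A** → B* is weak*-weak*-continuous. If Z^ℓ_{B**}(A**) = A** and H^1(A, B*) = {0}, then H^1(A**, B*) = {0}. -/
/-!
Common definitions: duals, biduals, Arens products, module actions,
derivations, first cohomology-vanishing predicates, weak-star continuity.
-/

noncomputable section

open ContinuousLinearMap Filter Topology Function

namespace ArensPaper

variable (𝕜 : Type) [RCLike 𝕜]

/-- The (topological) dual of a normed space. -/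
abbrev Du (X : Type) [NormedAddCommGroup X] [NormedSpace 𝕜 X] : Type :=
  StrongDual 𝕜 X

/-- The bidual of a normed space. -/
abbrev Bi (X : Type) [NormedAddCommGroup X] [NormedSpace 𝕜 X] : Type :=
  Du 𝕜 (Du 𝕜 X)

/-- Canonical embedding of a normed space into its bidual. -/
abbrev inDu (X : Type) [NormedAddCommGroup X] [NormedSpace 𝕜 X] : X →L[𝕜] Bi 𝕜 X :=
  NormedSpace.inclusionInDoubleDual 𝕜 X

variable {X Y Z : Type} [NormedAddCommGroup X] [NormedSpace 𝕜 X]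
  [NormedAddCommGroup Y] [NormedSpace 𝕜 Y] [NormedAddCommGroup Z] [NormedSpace 𝕜 Z]

/-- The transpose (Banach-space adjoint) of a continuous linear map. -/
def tr (T : X →L[𝕜] Y) : Du 𝕜 Y →L[𝕜] Du 𝕜 X :=
  (compL 𝕜 X Y 𝕜).flip T

/-- The second transpose of a continuous linear map. -/
def bitr (T : X →L[𝕜] Y) : Bi 𝕜 X →L[𝕜] Bi 𝕜 Y :=
  tr 𝕜 (tr 𝕜 T)

/-- The adjoint of a continuous bilinear map `m : X × Y → Z`:
`⟨adj m z' x, y⟩ = ⟨z', m x y⟩`. -/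
def adj (m : X →L[𝕜] Y →L[𝕜] Z) : Du 𝕜 Z →L[𝕜] X →L[𝕜] Du 𝕜 Y :=
  ((compL 𝕜 X (Y →L[𝕜] Z) (Du 𝕜 Y)).flip m).comp (compL 𝕜 Y Z 𝕜)

/-- The first Arens (triple adjoint) extension of a continuous bilinear map
to the biduals: `⟨ar1 m F G, z'⟩ = ⟨F, fun x => ⟨G, fun y => ⟨z', m x y⟩⟩⟩`. -/
def ar1 (m : X →L[𝕜] Y →L[𝕜] Z) : Bi 𝕜 X →L[𝕜] Bi 𝕜 Y →L[𝕜] Bi 𝕜 Z :=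
  adj 𝕜 (adj 𝕜 (adj 𝕜 m))

/-- The second Arens extension of a continuous bilinear map. -/
def ar2 (m : X →L[𝕜] Y →L[𝕜] Z) : Bi 𝕜 X →L[𝕜] Bi 𝕜 Y →L[𝕜] Bi 𝕜 Z :=
  (ar1 𝕜 m.flip).flip

/-- A continuous bilinear map is Arens regular if its two Arens extensions agree. -/
def ArensRegularBil (m : X →L[𝕜] Y →L[𝕜] Z) : Prop :=
  ar1 𝕜 m = ar2 𝕜 m

/-- A map between dual spaces is weak*-weak*-continuous. -/
def WStarCont (f : Du 𝕜 X → Du 𝕜 Y) : Prop :=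
  Continuous fun x : WeakDual 𝕜 X => (show WeakDual 𝕜 Y from f (show Du 𝕜 X from x))

/-- A map from a dual space to a normed space is weak*-weak-continuous. -/
def WStarWeakCont {B : Type} [NormedAddCommGroup B] [NormedSpace 𝕜 B]
    (f : Du 𝕜 X → B) : Prop :=
  Continuous fun x : WeakDual 𝕜 X => (show WeakSpace 𝕜 B from f (show Du 𝕜 X from x))

/-- `D` is a derivation with respect to a product `p` on `C` and module actions
`l`, `r` of `C` on `E`. -/
def IsDer {C E : Type} [NormedAddCommGroup C] [NormedSpace 𝕜 C]
    [NormedAddCommGroup E] [NormedSpace 𝕜 E]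
    (p : C → C → C) (l : C → E → E) (r : E → C → E) (D : C →L[𝕜] E) : Prop :=
  ∀ a b : C, D (p a b) = l a (D b) + r (D a) b

/-- `D` is an inner derivation for the module actions `l`, `r`. -/
def IsInner {C E : Type} [NormedAddCommGroup C] [NormedSpace 𝕜 C]
    [NormedAddCommGroup E] [NormedSpace 𝕜 E]
    (l : C → E → E) (r : E → C → E) (D : C →L[𝕜] E) : Prop :=
  ∃ x : E, ∀ a : C, D a = l a x - r x a

/-- A Banach algebra has a left bounded approximate identity. -/
def HasLBAI (A : Type) [NonUnitalNormedRing A] : Prop :=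
  ∃ (ι : Type) (L : Filter ι) (e : ι → A), L.NeBot ∧ (∃ c : ℝ, ∀ i, ‖e i‖ ≤ c) ∧
    ∀ a : A, Tendsto (fun i => e i * a) L (𝓝 a)

/-- A Banach bimodule structure on `E` over the "Banach algebra" `(C, p)`. -/
structure BimodStr {C : Type} [NormedAddCommGroup C] [NormedSpace 𝕜 C]
    (p : C →L[𝕜] C →L[𝕜] C) (E : Type) [NormedAddCommGroup E] [NormedSpace 𝕜 E] :
    Type where
  l : C →L[𝕜] E →L[𝕜] E
  r : E →L[𝕜] C →L[𝕜] E
  l_mul : ∀ a b x, l (p a b) x = l a (l b x)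
  r_mul : ∀ x a b, r (r x a) b = r x (p a b)
  lr : ∀ a x b, r (l a x) b = l a (r x b)

/-- A bundled Banach bimodule over the "Banach algebra" `(C, p)`. -/
structure BBimod {C : Type} [NormedAddCommGroup C] [NormedSpace 𝕜 C]
    (p : C →L[𝕜] C →L[𝕜] C) : Type 1 where
  E : Type
  [grp : NormedAddCommGroup E]
  [mod : NormedSpace 𝕜 E]
  [cpl : CompleteSpace E]
  str : BimodStr 𝕜 p E

attribute [instance] BBimod.grp BBimod.mod BBimod.cpl

/-- Amenability of the "Banach algebra" `(C, p)`: every continuous derivation into the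
dual of any Banach bimodule is inner. -/
def IsAmenableP {C : Type} [NormedAddCommGroup C] [NormedSpace 𝕜 C]
    (p : C →L[𝕜] C →L[𝕜] C) : Prop :=
  ∀ (M : BBimod 𝕜 p) (D : C →L[𝕜] Du 𝕜 M.E),
    IsDer 𝕜 (fun a b => p a b)
      (fun a f => f.comp (M.str.r.flip a)) (fun f a => f.comp (M.str.l a)) D →
    IsInner 𝕜 (fun a f => f.comp (M.str.r.flip a)) (fun f a => f.comp (M.str.l a)) D

/-- Weak amenability of a Banach algebra: every continuous derivation into the dual
(with the dual actions of the regular bimodule) is inner. -/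
def WeaklyAmenable (A : Type) [NonUnitalNormedRing A] [NormedSpace 𝕜 A]
    [IsScalarTower 𝕜 A A] [SMulCommClass 𝕜 A A] : Prop :=
  ∀ D : A →L[𝕜] Du 𝕜 A,
    IsDer 𝕜 (fun a b => a * b)
      (fun a f => f.comp ((ContinuousLinearMap.mul 𝕜 A).flip a))
      (fun f a => f.comp (ContinuousLinearMap.mul 𝕜 A a)) D →
    IsInner 𝕜 (fun a f => f.comp ((ContinuousLinearMap.mul 𝕜 A).flip a))
      (fun f a => f.comp (ContinuousLinearMap.mul 𝕜 A a)) D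

/-- The embedding of the predual `X` into the dual `A*`, given an identification
`j : A ≃ X*`. -/
def predualEmbed {A X : Type} [NormedAddCommGroup A] [NormedSpace 𝕜 A]
    [NormedAddCommGroup X] [NormedSpace 𝕜 X] (j : A ≃ₗᵢ[𝕜] Du 𝕜 X) (x : X) : Du 𝕜 A :=
  (inDu 𝕜 X x).comp j.toLinearIsometry.toContinuousLinearMap

/-- `j : A ≃ X*` makes `A` a dual Banach algebra: the image of `X` in `A*` is a
submodule of `A*` for the dual actions. -/
def IsDualBanachAlgebra {A X : Type} [NonUnitalNormedRing A] [NormedSpace 𝕜 A]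
    [IsScalarTower 𝕜 A A] [SMulCommClass 𝕜 A A]
    [NormedAddCommGroup X] [NormedSpace 𝕜 X] (j : A ≃ₗᵢ[𝕜] Du 𝕜 X) : Prop :=
  ∀ (a : A) (x : X),
    ((predualEmbed 𝕜 j x).comp ((ContinuousLinearMap.mul 𝕜 A).flip a)
        ∈ Set.range (predualEmbed 𝕜 j)) ∧
    ((predualEmbed 𝕜 j x).comp (ContinuousLinearMap.mul 𝕜 A a)
        ∈ Set.range (predualEmbed 𝕜 j))

/-- A normed space is weakly sequentially complete. -/
def WSCSpace (E : Type) [NormedAddCommGroup E] [NormedSpace 𝕜 E] : Prop :=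
  ∀ f : ℕ → E,
    (∀ φ : Du 𝕜 E, ∃ L : 𝕜, Tendsto (fun n => φ (f n)) atTop (𝓝 L)) →
    ∃ e : E, ∀ φ : Du 𝕜 E, Tendsto (fun n => φ (f n)) atTop (𝓝 (φ e))

/-- Left multiplication by `a ∈ A` restricted to an ideal `I`. -/
def mulLRes {A : Type} [NonUnitalNormedRing A] [NormedSpace 𝕜 A]
    [IsScalarTower 𝕜 A A] [SMulCommClass 𝕜 A A] (I : Submodule 𝕜 A) (a : A)
    (h : ∀ x : I, a * (x : A) ∈ I) : I →L[𝕜] I :=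
  ((ContinuousLinearMap.mul 𝕜 A a).comp I.subtypeL).codRestrict I h

/-- Right multiplication by `a ∈ A` restricted to an ideal `I`. -/
def mulRRes {A : Type} [NonUnitalNormedRing A] [NormedSpace 𝕜 A]
    [IsScalarTower 𝕜 A A] [SMulCommClass 𝕜 A A] (I : Submodule 𝕜 A) (a : A)
    (h : ∀ x : I, (x : A) * a ∈ I) : I →L[𝕜] I :=
  (((ContinuousLinearMap.mul 𝕜 A).flip a).comp I.subtypeL).codRestrict I h


/-- Connes-amenability of the bidual algebra `(A**, p)`: every weak*-weak*-continuous
derivation into a normal dual Banach bimodule is inner. -/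
def ConnesAmenableBidual {A : Type} [NonUnitalNormedRing A] [NormedSpace 𝕜 A]
    [IsScalarTower 𝕜 A A] [SMulCommClass 𝕜 A A]
    (p : Bi 𝕜 A →L[𝕜] Bi 𝕜 A →L[𝕜] Bi 𝕜 A) : Prop :=
  ∀ (X : Type) [NormedAddCommGroup X] [NormedSpace 𝕜 X] [CompleteSpace X]
    (M : BimodStr 𝕜 p (Du 𝕜 X)),
    (∀ f : Du 𝕜 X, WStarCont 𝕜 (fun m : Bi 𝕜 A => M.l m f) ∧
        WStarCont 𝕜 (fun m : Bi 𝕜 A => M.r f m)) →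
    ∀ D : Bi 𝕜 A →L[𝕜] Du 𝕜 X,
      IsDer 𝕜 (fun m n => p m n) (fun m f => M.l m f) (fun f m => M.r f m) D →
      WStarCont 𝕜 (fun m => D m) →
      IsInner 𝕜 (fun m f => M.l m f) (fun f m => M.r f m) D

section AuxRepr

variable {𝕜' : Type} [RCLike 𝕜'] {X' : Type} [NormedAddCommGroup X'] [NormedSpace 𝕜' X']

/-- A weak-star continuous linear functional on a dual space is evaluation at a point. -/
lemma weakDualRepr (φ : Du 𝕜' X' →ₗ[𝕜'] 𝕜')
    (hφ : Continuous fun μ : WeakDual 𝕜' X' => φ (show Du 𝕜' X' from μ)) :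
    ∃ x : X', ∀ μ : Du 𝕜' X', φ μ = μ x := by
  haveI : Nonempty X' := ⟨0⟩
  have hws := LinearMap.weakBilin_withSeminorms (topDualPairing 𝕜' X')
  let φ' : WeakDual 𝕜' X' →ₗ[𝕜'] 𝕜' :=
    { toFun := fun μ => φ (show Du 𝕜' X' from μ), map_add' := φ.map_add,
      map_smul' := φ.map_smul }
  have hq : Continuous (φ'.toSeminorm : WeakDual 𝕜' X' → ℝ) := by
    exact hφ.norm
  obtain ⟨s, C, hC, hle⟩ := Seminorm.bound_of_continuous hws φ'.toSeminorm hq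
  have hker : ⨅ i : s, LinearMap.ker ((topDualPairing 𝕜' X').flip (i : X'))
      ≤ LinearMap.ker φ := by
    intro μ hμ
    simp only [Submodule.mem_iInf, LinearMap.mem_ker] at hμ ⊢
    have h0 : φ'.toSeminorm μ ≤ 0 := by
      refine le_trans (hle μ) ?_
      have h1 : (s.sup ((topDualPairing 𝕜' X').toSeminormFamily)) μ ≤ 0 := by
        refine Seminorm.finset_sup_apply_le le_rfl fun i hi => ?_
        have := hμ ⟨i, hi⟩
        simp only [LinearMap.toSeminormFamily_apply]
        simp_all [LinearMap.flip_apply]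
      calc (C • s.sup ((topDualPairing 𝕜' X').toSeminormFamily)) μ
          = (C : ℝ) * (s.sup ((topDualPairing 𝕜' X').toSeminormFamily)) μ := rfl
        _ ≤ (C : ℝ) * 0 := mul_le_mul_of_nonneg_left h1 C.2
        _ = 0 := mul_zero _
    have h2 := le_antisymm h0 (apply_nonneg _ _)
    exact norm_eq_zero.mp h2
  have hsp := mem_span_of_iInf_ker_le_ker (ι := s)
    (L := fun i : s => (topDualPairing 𝕜' X').flip (i : X')) (K := φ) hker
  obtain ⟨c, hc⟩ := (Submodule.mem_span_range_iff_exists_fun 𝕜').1 hsp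
  refine ⟨∑ i : s, c i • (i : X'), fun μ => ?_⟩
  rw [← hc]
  simp [map_sum, map_smul, LinearMap.flip_apply, topDualPairing_apply, smul_eq_mul]

end AuxRepr
set_option maxHeartbeats 1000000 in
/-- Let `A` be a Banach algebra and `B` a Banach `A`-bimodule such that every continuous
derivation `D : A** → B*` is weak*-weak*-continuous.  If `Z^ℓ_{B**}(A**) = A**` and
`H^1(A, B*) = {0}`, then `H^1(A**, B*) = {0}`.
Here `A**` carries the first Arens product, `B*` is viewed inside `B***`, which is an
`A**`-bimodule as the dual of the Arens `A**`-bimodule `B**`. -/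
theorem statement0 {𝕜 : Type} [RCLike 𝕜] {A : Type}
    [NonUnitalNormedRing A] [NormedSpace 𝕜 A] [IsScalarTower 𝕜 A A]
    [SMulCommClass 𝕜 A A] [CompleteSpace A]
    {B : Type} [NormedAddCommGroup B] [NormedSpace 𝕜 B] [CompleteSpace B]
    (M : BimodStr 𝕜 (ContinuousLinearMap.mul 𝕜 A) B)
    -- every continuous derivation `D : A** → B*` is weak*-weak*-continuous
    (hwc : ∀ D : Bi 𝕜 A →L[𝕜] Du 𝕜 B,
      IsDer 𝕜 (fun m n => ar1 𝕜 (ContinuousLinearMap.mul 𝕜 A) m n)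
        (fun (m : Bi 𝕜 A) (F : Du 𝕜 (Bi 𝕜 B)) => F.comp ((ar1 𝕜 M.r).flip m))
        (fun (F : Du 𝕜 (Bi 𝕜 B)) (m : Bi 𝕜 A) => F.comp (ar1 𝕜 M.l m))
        ((inDu 𝕜 (Du 𝕜 B)).comp D) →
      WStarCont 𝕜 fun m => D m)
    -- `Z^ℓ_{B**}(A**) = A**`
    (hz : ∀ m : Bi 𝕜 A, WStarCont 𝕜 fun F : Bi 𝕜 B => ar1 𝕜 M.l m F)
    -- `H^1(A, B*) = {0}`
    (h1 : ∀ d : A →L[𝕜] Du 𝕜 B,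
      IsDer 𝕜 (fun a b => a * b)
        (fun (a : A) (f : Du 𝕜 B) => f.comp (M.r.flip a))
        (fun (f : Du 𝕜 B) (a : A) => f.comp (M.l a)) d →
      IsInner 𝕜 (fun (a : A) (f : Du 𝕜 B) => f.comp (M.r.flip a))
        (fun (f : Du 𝕜 B) (a : A) => f.comp (M.l a)) d) :
    -- `H^1(A**, B*) = {0}`
    ∀ D : Bi 𝕜 A →L[𝕜] Du 𝕜 B,
      IsDer 𝕜 (fun m n => ar1 𝕜 (ContinuousLinearMap.mul 𝕜 A) m n)
        (fun (m : Bi 𝕜 A) (F : Du 𝕜 (Bi 𝕜 B)) => F.comp ((ar1 𝕜 M.r).flip m))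
        (fun (F : Du 𝕜 (Bi 𝕜 B)) (m : Bi 𝕜 A) => F.comp (ar1 𝕜 M.l m))
        ((inDu 𝕜 (Du 𝕜 B)).comp D) →
      ∃ f : Du 𝕜 B, ∀ m : Bi 𝕜 A,
        inDu 𝕜 (Du 𝕜 B) (D m) =
          (inDu 𝕜 (Du 𝕜 B) f).comp ((ar1 𝕜 M.r).flip m) -
            (inDu 𝕜 (Du 𝕜 B) f).comp (ar1 𝕜 M.l m) := by

  intro D hD
  have hinj : Function.Injective (inDu 𝕜 (Du 𝕜 B)) :=
    (NormedSpace.inclusionInDoubleDualLi 𝕜 (E := Du 𝕜 B)).injective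
  -- the restriction of `D` to `A` is a derivation `d : A → B*`
  set d : A →L[𝕜] Du 𝕜 B := D.comp (inDu 𝕜 A) with hd_def
  have hF1 : ∀ a b : A, ar1 𝕜 (ContinuousLinearMap.mul 𝕜 A) (inDu 𝕜 A a) (inDu 𝕜 A b)
      = inDu 𝕜 A (a * b) := fun a b => by ext y; rfl
  have hF2 : ∀ (f : Du 𝕜 B) (a : A),
      (inDu 𝕜 (Du 𝕜 B) f).comp ((ar1 𝕜 M.r).flip (inDu 𝕜 A a))
      = inDu 𝕜 (Du 𝕜 B) (f.comp (M.r.flip a)) := fun f a => by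
    ext F; exact congrArg F (by ext b; rfl)
  have hF3 : ∀ (f : Du 𝕜 B) (a : A),
      (inDu 𝕜 (Du 𝕜 B) f).comp (ar1 𝕜 M.l (inDu 𝕜 A a))
      = inDu 𝕜 (Du 𝕜 B) (f.comp (M.l a)) := fun f a => by
    ext F; exact congrArg F (by ext b; rfl)
  have hd : IsDer 𝕜 (fun a b : A => a * b)
      (fun (a : A) (f : Du 𝕜 B) => f.comp (M.r.flip a))
      (fun (f : Du 𝕜 B) (a : A) => f.comp (M.l a)) d := by
    intro a b
    apply hinj
    have h := hD (inDu 𝕜 A a) (inDu 𝕜 A b)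
    simp only [ContinuousLinearMap.comp_apply] at h
    rw [hF1] at h
    calc inDu 𝕜 (Du 𝕜 B) (d (a * b)) = inDu 𝕜 (Du 𝕜 B) (D (inDu 𝕜 A (a * b))) := rfl
      _ = (inDu 𝕜 (Du 𝕜 B) (D (inDu 𝕜 A b))).comp ((ar1 𝕜 M.r).flip (inDu 𝕜 A a))
          + (inDu 𝕜 (Du 𝕜 B) (D (inDu 𝕜 A a))).comp (ar1 𝕜 M.l (inDu 𝕜 A b)) := h
      _ = inDu 𝕜 (Du 𝕜 B) ((d b).comp (M.r.flip a))
          + inDu 𝕜 (Du 𝕜 B) ((d a).comp (M.l b)) := by rw [hF2, hF3]; rfl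
      _ = inDu 𝕜 (Du 𝕜 B) ((d b).comp (M.r.flip a) + (d a).comp (M.l b)) :=
          (map_add _ _ _).symm
  -- `H¹(A, B*) = 0` gives an implementing functional `f`
  obtain ⟨f, hf⟩ := h1 d hd
  refine ⟨f, fun m => ?_⟩
  -- representation of the right action of `m` on `f` as an element of `B*`
  set φm : Du 𝕜 (Du 𝕜 B) →ₗ[𝕜] 𝕜 :=
    { toFun := fun F => ar1 𝕜 M.l m F f
      map_add' := fun F G => by simp only [map_add, ContinuousLinearMap.add_apply]
      map_smul' := fun c F => by
        simp only [map_smul, ContinuousLinearMap.smul_apply, RingHom.id_apply] } with hφm_def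
  have hφmc : Continuous fun F : WeakDual 𝕜 (Du 𝕜 B) => φm (show Du 𝕜 (Du 𝕜 B) from F) :=
    (WeakDual.eval_continuous (𝕜 := 𝕜) (E := Du 𝕜 B) f).comp (hz m)
  obtain ⟨hm, hhm⟩ := weakDualRepr φm hφmc
  -- pointwise identity on `B`, via weak*-continuity of `D` and vanishing on `A`
  have hDval : ∀ b : B, ∀ m' : Bi 𝕜 A,
      D m' b = m' (adj 𝕜 M.r f b) - m' (adj 𝕜 (adj 𝕜 M.l) (inDu 𝕜 B b) f) := by
    intro b
    set η : Du 𝕜 A := adj 𝕜 M.r f b with hη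
    set ξ : Du 𝕜 A := adj 𝕜 (adj 𝕜 M.l) (inDu 𝕜 B b) f with hξ
    set χ : Du 𝕜 (Du 𝕜 A) →ₗ[𝕜] 𝕜 :=
      { toFun := fun m' => D m' b - m' η + m' ξ
        map_add' := fun x y => by
          simp only [map_add, ContinuousLinearMap.add_apply]; ring
        map_smul' := fun c x => by
          simp only [map_smul, ContinuousLinearMap.smul_apply, RingHom.id_apply,
            smul_eq_mul]; ring } with hχ_def
    have hχc : Continuous fun m' : WeakDual 𝕜 (Du 𝕜 A) => χ (show Du 𝕜 (Du 𝕜 A) from m') := by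
      have hDc := (WeakDual.eval_continuous (𝕜 := 𝕜) (E := B) b).comp (hwc D hD)
      exact (hDc.sub (WeakDual.eval_continuous η)).add (WeakDual.eval_continuous ξ)
    obtain ⟨μ, hμ⟩ := weakDualRepr χ hχc
    have hμ0 : μ = 0 := by
      ext a
      have h := (hμ (inDu 𝕜 A a)).symm
      have hda := DFunLike.congr_fun (hf a) b
      simp only [ContinuousLinearMap.sub_apply, ContinuousLinearMap.comp_apply,
        ContinuousLinearMap.flip_apply] at hda
      calc μ a = inDu 𝕜 A a μ := rfl
        _ = χ (inDu 𝕜 A a) := h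
        _ = d a b - f (M.r b a) + f (M.l a b) := rfl
        _ = 0 := by rw [hda]; ring
    intro m'
    have h := hμ m'
    rw [hμ0] at h
    simp only [map_zero] at h
    have h' : D m' b - m' η + m' ξ = 0 := h
    linear_combination h'
  -- the element `g := m·f` of `B*`
  have hm_eq : ∀ b : B, hm b = m (adj 𝕜 (adj 𝕜 M.l) (inDu 𝕜 B b) f) := fun b =>
    (hhm (inDu 𝕜 B b)).symm
  have hkey : D m = adj 𝕜 (adj 𝕜 M.r) m f - hm := by
    ext b
    show D m b = adj 𝕜 (adj 𝕜 M.r) m f b - hm b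
    rw [hDval b m, hm_eq b]
    rfl
  ext F
  show F (D m) = ar1 𝕜 M.r F m f - ar1 𝕜 M.l m F f
  rw [hkey, map_sub]
  have h2 : F hm = ar1 𝕜 M.l m F f := (hhm F).symm
  rw [h2]
  rfl

end ArensPaper
end
end

section
/- Let A be an Arens regular Banach algebra such that every continuous derivation D : A** → A* is weak*-weak*-continuous. If A is weakly amenable, then H^1(A**, A*) = {0}. -/
/-!
Common definitions: duals, biduals, Arens products, module actions,
derivations, first cohomology-vanishing predicates, weak-star continuity.
-/

noncomputable section

open ContinuousLinearMap Filter Topology Function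

namespace ArensPaper

variable (𝕜 : Type) [RCLike 𝕜]

variable {X Y Z : Type} [NormedAddCommGroup X] [NormedSpace 𝕜 X]
  [NormedAddCommGroup Y] [NormedSpace 𝕜 Y] [NormedAddCommGroup Z] [NormedSpace 𝕜 Z]

section Aux

variable {A : Type} [NonUnitalNormedRing A] [NormedSpace 𝕜 A]
  [IsScalarTower 𝕜 A A] [SMulCommClass 𝕜 A A]

omit [IsScalarTower 𝕜 A A] [SMulCommClass 𝕜 A A] in
/-- Any element of the bidual agrees exactly with some element of `A` on a
finite set of functionals. -/
lemma exists_agree (m : Bi 𝕜 A) (s : Finset (Du 𝕜 A)) :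
    ∃ a : A, ∀ g ∈ s, g a = m g := by
  classical
  set T : A →ₗ[𝕜] (s → 𝕜) :=
    LinearMap.pi (fun g : s => ((g : Du 𝕜 A) : A →ₗ[𝕜] 𝕜)) with hT
  have hv : (fun g : s => m g) ∈ LinearMap.range T := by
    rw [← Subspace.forall_mem_dualAnnihilator_apply_eq_zero_iff]
    intro φ hφ
    rw [Submodule.mem_dualAnnihilator] at hφ
    set c : s → 𝕜 := fun i => φ (fun j => if i = j then 1 else 0) with hc
    set G : Du 𝕜 A := ∑ i : s, c i • (i : Du 𝕜 A) with hG
    have hG0 : G = 0 := by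
      ext a
      have h0 : φ (T a) = 0 := hφ _ ⟨a, rfl⟩
      have h1 := LinearMap.pi_apply_eq_sum_univ φ (T a)
      simp only [hG, ContinuousLinearMap.coe_sum', Finset.sum_apply,
        ContinuousLinearMap.coe_smul', Pi.smul_apply, smul_eq_mul,
        ContinuousLinearMap.zero_apply]
      rw [← h0, h1]
      refine Finset.sum_congr rfl fun i _ => ?_
      simp only [hT, LinearMap.pi_apply, ContinuousLinearMap.coe_coe, smul_eq_mul, ← hc]
      ring
    have h1 := LinearMap.pi_apply_eq_sum_univ φ (fun g : s => m g)
    have h2 : φ (fun g : s => m g) = m G := by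
      rw [h1, hG, map_sum]
      refine Finset.sum_congr rfl fun i _ => ?_
      simp only [smul_eq_mul, map_smul, ← hc]
      ring
    rw [h2, hG0, map_zero]
  obtain ⟨a, ha⟩ := hv
  refine ⟨a, fun g hg => ?_⟩
  have := congrFun ha ⟨g, hg⟩
  simpa [hT] using this

omit [IsScalarTower 𝕜 A A] [SMulCommClass 𝕜 A A] in
/-- The canonical image of `A` is weak*-dense in the bidual. -/
lemma dense_inDu :
    Dense (Set.range (fun a : A =>
      (show WeakDual 𝕜 (Du 𝕜 A) from inDu 𝕜 A a))) := by
  intro m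
  have h := fun s : Finset (Du 𝕜 A) => exists_agree 𝕜 (show Bi 𝕜 A from m) s
  choose u hu using h
  have ht : Tendsto (fun s : Finset (Du 𝕜 A) =>
      (show WeakDual 𝕜 (Du 𝕜 A) from inDu 𝕜 A (u s))) atTop (𝓝 m) := by
    rw [tendsto_iff_forall_eval_tendsto_topDualPairing]
    intro g
    have hev : ∀ᶠ s : Finset (Du 𝕜 A) in atTop,
        topDualPairing 𝕜 (Du 𝕜 A) (inDu 𝕜 A (u s)) g
          = topDualPairing 𝕜 (Du 𝕜 A) m g := by
      filter_upwards [Filter.eventually_ge_atTop ({g} : Finset (Du 𝕜 A))] with s hs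
      exact hu s g (hs (Finset.mem_singleton_self g))
    exact Filter.Tendsto.congr' (by filter_upwards [hev] with s hs using hs.symm)
      tendsto_const_nhds
  exact mem_closure_of_tendsto ht
    (Filter.Eventually.of_forall fun s => Set.mem_range_self (u s))

end Aux

set_option maxHeartbeats 1600000 in
/-- Let `A` be an Arens regular Banach algebra such that every continuous derivation
`D : A** → A*` is weak*-weak*-continuous.  If `A` is weakly amenable, then
`H^1(A**, A*) = {0}`. -/
theorem statement1 {𝕜 : Type} [RCLike 𝕜] {A : Type}
    [NonUnitalNormedRing A] [NormedSpace 𝕜 A] [IsScalarTower 𝕜 A A]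
    [SMulCommClass 𝕜 A A] [CompleteSpace A]
    -- `A` is Arens regular
    (hreg : ArensRegularBil 𝕜 (ContinuousLinearMap.mul 𝕜 A))
    -- every continuous derivation `D : A** → A*` is weak*-weak*-continuous
    (hwc : ∀ D : Bi 𝕜 A →L[𝕜] Du 𝕜 A,
      IsDer 𝕜 (fun m n => ar1 𝕜 (ContinuousLinearMap.mul 𝕜 A) m n)
        (fun (m : Bi 𝕜 A) (F : Du 𝕜 (Bi 𝕜 A)) =>
          F.comp ((ar1 𝕜 (ContinuousLinearMap.mul 𝕜 A)).flip m))
        (fun (F : Du 𝕜 (Bi 𝕜 A)) (m : Bi 𝕜 A) =>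
          F.comp (ar1 𝕜 (ContinuousLinearMap.mul 𝕜 A) m))
        ((inDu 𝕜 (Du 𝕜 A)).comp D) →
      WStarCont 𝕜 fun m => D m)
    -- `A` is weakly amenable
    (hwa : WeaklyAmenable 𝕜 A) :
    -- `H^1(A**, A*) = {0}`
    ∀ D : Bi 𝕜 A →L[𝕜] Du 𝕜 A,
      IsDer 𝕜 (fun m n => ar1 𝕜 (ContinuousLinearMap.mul 𝕜 A) m n)
        (fun (m : Bi 𝕜 A) (F : Du 𝕜 (Bi 𝕜 A)) =>
          F.comp ((ar1 𝕜 (ContinuousLinearMap.mul 𝕜 A)).flip m))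
        (fun (F : Du 𝕜 (Bi 𝕜 A)) (m : Bi 𝕜 A) =>
          F.comp (ar1 𝕜 (ContinuousLinearMap.mul 𝕜 A) m))
        ((inDu 𝕜 (Du 𝕜 A)).comp D) →
      ∃ f : Du 𝕜 A, ∀ m : Bi 𝕜 A,
        inDu 𝕜 (Du 𝕜 A) (D m) =
          (inDu 𝕜 (Du 𝕜 A) f).comp ((ar1 𝕜 (ContinuousLinearMap.mul 𝕜 A)).flip m) -
            (inDu 𝕜 (Du 𝕜 A) f).comp (ar1 𝕜 (ContinuousLinearMap.mul 𝕜 A) m) := by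
  intro D hD
  -- the restriction of `D` to `A` is a derivation `A → A*`
  have hmul : ∀ a b : A, ar1 𝕜 (ContinuousLinearMap.mul 𝕜 A)
      (inDu 𝕜 A a) (inDu 𝕜 A b) = inDu 𝕜 A (a * b) := fun a b => rfl
  have hder : IsDer 𝕜 (fun a b : A => a * b)
      (fun a f => f.comp ((ContinuousLinearMap.mul 𝕜 A).flip a))
      (fun f a => f.comp (ContinuousLinearMap.mul 𝕜 A a)) (D.comp (inDu 𝕜 A)) := by
    intro a b
    have h := hD (inDu 𝕜 A a) (inDu 𝕜 A b)
    simp only [hmul a b] at h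
    ext c
    have h2 := congrArg (fun Φ : Bi 𝕜 (Du 𝕜 A) => Φ (inDu 𝕜 A c)) h
    simp only [ContinuousLinearMap.add_apply, ContinuousLinearMap.comp_apply,
      ContinuousLinearMap.flip_apply] at h2
    rw [hmul c a, hmul b c] at h2
    simpa using h2
  obtain ⟨f, hf⟩ := hwa (D.comp (inDu 𝕜 A)) hder
  -- the candidate inner derivation on the bidual
  set Φ : Bi 𝕜 A → Du 𝕜 A := fun m =>
    m.comp (adj 𝕜 (ContinuousLinearMap.mul 𝕜 A) f)
      - m.comp (adj 𝕜 (ContinuousLinearMap.mul 𝕜 A).flip f) with hΦ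
  have hΦκ : ∀ c : A, D (inDu 𝕜 A c) = Φ (inDu 𝕜 A c) := by
    intro c
    have hcomp : Φ (inDu 𝕜 A c)
        = f.comp ((ContinuousLinearMap.mul 𝕜 A).flip c)
          - f.comp (ContinuousLinearMap.mul 𝕜 A c) := rfl
    rw [hcomp]
    exact hf c
  -- `D` agrees with `Φ` everywhere, by weak*-density and weak*-continuity
  have hDc : Continuous (fun x : WeakDual 𝕜 (Du 𝕜 A) =>
      (show WeakDual 𝕜 A from D (show Du 𝕜 (Du 𝕜 A) from x))) := hwc D hD
  have hΦc : Continuous (fun x : WeakDual 𝕜 (Du 𝕜 A) =>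
      (show WeakDual 𝕜 A from Φ (show Du 𝕜 (Du 𝕜 A) from x))) := by
    apply WeakBilin.continuous_of_continuous_eval
    intro y
    exact (WeakDual.eval_continuous (adj 𝕜 (ContinuousLinearMap.mul 𝕜 A) f y)).sub
      (WeakDual.eval_continuous (adj 𝕜 (ContinuousLinearMap.mul 𝕜 A).flip f y))
  have hkey : ∀ m : Bi 𝕜 A, D m = Φ m := by
    have hclosed : IsClosed {x : WeakDual 𝕜 (Du 𝕜 A) |
        (show WeakDual 𝕜 A from D (show Du 𝕜 (Du 𝕜 A) from x))
          = (show WeakDual 𝕜 A from Φ (show Du 𝕜 (Du 𝕜 A) from x))} :=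
      isClosed_eq hDc hΦc
    have hsub : Set.range (fun a : A => (show WeakDual 𝕜 (Du 𝕜 A) from inDu 𝕜 A a))
        ⊆ {x : WeakDual 𝕜 (Du 𝕜 A) |
            (show WeakDual 𝕜 A from D (show Du 𝕜 (Du 𝕜 A) from x))
              = (show WeakDual 𝕜 A from Φ (show Du 𝕜 (Du 𝕜 A) from x))} := by
      rintro _ ⟨a, rfl⟩
      exact hΦκ a
    intro m
    have hm := closure_mono hsub (dense_inDu 𝕜 (show WeakDual 𝕜 (Du 𝕜 A) from m))
    rw [hclosed.closure_eq] at hm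
    exact hm
  -- conclude
  refine ⟨f, fun m => ?_⟩
  ext F
  have hreg' : ar1 𝕜 (ContinuousLinearMap.mul 𝕜 A) m F
      = ar1 𝕜 (ContinuousLinearMap.mul 𝕜 A).flip F m := by rw [hreg]; rfl
  simp only [ContinuousLinearMap.sub_apply, ContinuousLinearMap.comp_apply,
    ContinuousLinearMap.flip_apply]
  rw [hreg', hkey m]
  show F (Φ m) = (ar1 𝕜 (ContinuousLinearMap.mul 𝕜 A) F m) f
      - (ar1 𝕜 (ContinuousLinearMap.mul 𝕜 A).flip F m) f
  exact map_sub F _ _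

end ArensPaper
end
end

section
/- Let A be a Banach algebra and B a Banach A-bimodule such that A**·B ⊆ B and B·A** ⊆ B (with respect to the Arens extensions of the module actions) and such that every continuous derivation from A** into B is weak*-weak-continuous. If H^1(A, B) = {0}, then H^1(A**, B) = {0}. -/
/-!
Common definitions: duals, biduals, Arens products, module actions,
derivations, first cohomology-vanishing predicates, weak-star continuity.
-/

noncomputable section

open ContinuousLinearMap Filter Topology Function

namespace ArensPaper

variable (𝕜 : Type) [RCLike 𝕜]

variable {X Y Z : Type} [NormedAddCommGroup X] [NormedSpace 𝕜 X]
  [NormedAddCommGroup Y] [NormedSpace 𝕜 Y] [NormedAddCommGroup Z] [NormedSpace 𝕜 Z]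

set_option synthInstance.maxHeartbeats 400000
set_option maxHeartbeats 1000000 in
theorem wstar_fun_zero {𝕜 : Type} [RCLike 𝕜] {X : Type} [NormedAddCommGroup X]
    [NormedSpace 𝕜 X] (K : Bi 𝕜 X →ₗ[𝕜] 𝕜)
    (hc : Continuous fun m : WeakDual 𝕜 (Du 𝕜 X) => K (show Bi 𝕜 X from m))
    (hv : ∀ x : X, K (inDu 𝕜 X x) = 0) : ∀ m : Bi 𝕜 X, K m = 0 := by
  set E := Du 𝕜 X
  have hb := LinearMap.hasBasis_weakBilin (𝕜 := 𝕜) (E := Du 𝕜 E) (F := E) (topDualPairing 𝕜 E)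
  have h0 : (fun m : WeakDual 𝕜 E => K (show Bi 𝕜 X from m)) ⁻¹' Metric.ball 0 1 ∈
      𝓝 (0 : WeakDual 𝕜 E) := by
    apply (hc.continuousAt (x := 0)).preimage_mem_nhds
    have hK0 : K (show Bi 𝕜 X from (0 : WeakDual 𝕜 E)) = 0 := map_zero K
    rw [hK0]
    exact Metric.ball_mem_nhds 0 one_pos
  obtain ⟨U, hU, hsub⟩ := hb.mem_iff.mp h0
  obtain ⟨s, r, hr, rfl⟩ := (SeminormFamily.basisSets_iff _).mp hU
  have key : ∀ m : Bi 𝕜 X, (∀ ψ ∈ s, m ψ = 0) → K m = 0 := by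
    intro m hm
    by_contra hKm
    obtain ⟨c, hc2⟩ := NormedField.exists_lt_norm 𝕜 (1 / ‖K m‖)
    have hmem : (c • m : Bi 𝕜 X) ∈ ((s.sup (topDualPairing 𝕜 E).toSeminormFamily).ball 0 r) := by
      rw [Seminorm.mem_ball_zero]
      rcases s.eq_empty_or_nonempty with h | h
      · rw [h, Finset.sup_empty]
        simpa using hr
      · apply Seminorm.finset_sup_apply_lt hr
        intro ψ hψ
        have h2 : ((c • m : Bi 𝕜 X)) ψ = 0 := by
          rw [ContinuousLinearMap.smul_apply, hm ψ hψ, smul_zero]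
        simp only [LinearMap.toSeminormFamily_apply]
        rw [show ((topDualPairing 𝕜 E) (c • m : Bi 𝕜 X)) ψ = ((c • m : Bi 𝕜 X)) ψ from rfl, h2]
        simpa using hr
    have hlt := hsub hmem
    simp only [Set.mem_preimage, Metric.mem_ball, dist_zero_right] at hlt
    have hKcm : K ((c : 𝕜) • m) = c * K m := by simp
    replace hlt : ‖c‖ * ‖K m‖ < 1 := by
      have h' : K (c • m) ∈ Metric.ball (0:𝕜) 1 := hlt
      rwa [hKcm, Metric.mem_ball, dist_zero_right, norm_mul] at h'
    have h1 : (1:ℝ) < ‖c‖ * ‖K m‖ := by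
      rw [div_lt_iff₀ (norm_pos_iff.mpr hKm)] at hc2
      nlinarith [norm_nonneg (K m), norm_nonneg c]
    linarith
  have hker : (⨅ ψ : s, LinearMap.ker ((topDualPairing 𝕜 E).flip (ψ : E))) ≤ LinearMap.ker K := by
    intro m hm
    simp only [Submodule.mem_iInf, LinearMap.mem_ker] at hm ⊢
    exact key m fun ψ hψ => hm ⟨ψ, hψ⟩
  have hspan := mem_span_of_iInf_ker_le_ker (𝕜 := 𝕜) (E := Bi 𝕜 X) (ι := s) (L := fun ψ : s => (topDualPairing 𝕜 E).flip (ψ : E)) (K := K) hker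
  have hrange : K ∈ LinearMap.range (topDualPairing 𝕜 E).flip := by
    refine Submodule.span_le.mpr ?_ hspan
    rintro - ⟨ψ, rfl⟩
    exact ⟨ψ, rfl⟩
  obtain ⟨ψ₀, hψ₀⟩ := hrange
  have hψ0 : ψ₀ = 0 := by
    ext x
    have h2 := hv x
    rw [← hψ₀] at h2
    simp at h2 ⊢; exact h2
  intro m
  rw [← hψ₀, hψ0]
  exact map_zero m


set_option maxHeartbeats 1000000

/-- Let `A` be a Banach algebra and `B` a Banach `A`-bimodule with `A**·B ⊆ B` and
`B·A** ⊆ B` (for the Arens extensions of the module actions), such that every continuous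
derivation from `A**` into `B` is weak*-weak-continuous.  If `H^1(A, B) = {0}`, then
`H^1(A**, B) = {0}`. -/
theorem statement3 {𝕜 : Type} [RCLike 𝕜] {A : Type}
    [NonUnitalNormedRing A] [NormedSpace 𝕜 A] [IsScalarTower 𝕜 A A]
    [SMulCommClass 𝕜 A A] [CompleteSpace A]
    {B : Type} [NormedAddCommGroup B] [NormedSpace 𝕜 B] [CompleteSpace B]
    (M : BimodStr 𝕜 (ContinuousLinearMap.mul 𝕜 A) B)
    -- `A**·B ⊆ B` and `B·A** ⊆ B`
    (hmod : ∀ (m : Bi 𝕜 A) (b : B),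
      ar1 𝕜 M.l m (inDu 𝕜 B b) ∈ Set.range (inDu 𝕜 B) ∧
      ar1 𝕜 M.r (inDu 𝕜 B b) m ∈ Set.range (inDu 𝕜 B))
    -- every continuous derivation from `A**` into `B` is weak*-weak-continuous
    (hwc : ∀ D : Bi 𝕜 A →L[𝕜] B,
      IsDer 𝕜 (fun m n => ar1 𝕜 (ContinuousLinearMap.mul 𝕜 A) m n)
        (fun (m : Bi 𝕜 A) (F : Bi 𝕜 B) => ar1 𝕜 M.l m F)
        (fun (F : Bi 𝕜 B) (m : Bi 𝕜 A) => ar1 𝕜 M.r F m)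
        ((inDu 𝕜 B).comp D) →
      WStarWeakCont 𝕜 fun m => D m)
    -- `H^1(A, B) = {0}`
    (h1 : ∀ d : A →L[𝕜] B,
      IsDer 𝕜 (fun a b => a * b)
        (fun (a : A) (x : B) => M.l a x) (fun (x : B) (a : A) => M.r x a) d →
      IsInner 𝕜 (fun (a : A) (x : B) => M.l a x) (fun (x : B) (a : A) => M.r x a) d) :
    -- `H^1(A**, B) = {0}`
    ∀ D : Bi 𝕜 A →L[𝕜] B,
      IsDer 𝕜 (fun m n => ar1 𝕜 (ContinuousLinearMap.mul 𝕜 A) m n)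
        (fun (m : Bi 𝕜 A) (F : Bi 𝕜 B) => ar1 𝕜 M.l m F)
        (fun (F : Bi 𝕜 B) (m : Bi 𝕜 A) => ar1 𝕜 M.r F m)
        ((inDu 𝕜 B).comp D) →
      ∃ x : B, ∀ m : Bi 𝕜 A,
        inDu 𝕜 B (D m) = ar1 𝕜 M.l m (inDu 𝕜 B x) - ar1 𝕜 M.r (inDu 𝕜 B x) m := by
  intro D hder
  have hinj : Function.Injective (inDu 𝕜 B) :=
    (NormedSpace.inclusionInDoubleDualLi (𝕜 := 𝕜) (E := B)).injective
  -- the restriction of D to A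
  set d : A →L[𝕜] B := D.comp (inDu 𝕜 A) with hd_def
  have hd0 : ∀ y : A, D (inDu 𝕜 A y) = d y := fun _ => rfl
  -- d is a derivation on A
  have hd : IsDer 𝕜 (fun a b : A => a * b)
      (fun (a : A) (x : B) => M.l a x) (fun (x : B) (a : A) => M.r x a) d := by
    intro a b
    apply hinj
    have h := hder (inDu 𝕜 A a) (inDu 𝕜 A b)
    simp only [ContinuousLinearMap.comp_apply] at h
    have e1 : ar1 𝕜 (ContinuousLinearMap.mul 𝕜 A) (inDu 𝕜 A a) (inDu 𝕜 A b)
        = inDu 𝕜 A (a * b) := rfl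
    rw [e1, hd0, hd0, hd0] at h
    have e2 : ar1 𝕜 M.l (inDu 𝕜 A a) (inDu 𝕜 B (d b)) = inDu 𝕜 B (M.l a (d b)) := rfl
    have e3 : ar1 𝕜 M.r (inDu 𝕜 B (d a)) (inDu 𝕜 A b) = inDu 𝕜 B (M.r (d a) b) := rfl
    rw [e2, e3, ← map_add] at h
    exact h
  obtain ⟨x, hx⟩ := h1 d hd
  -- D is weak-star-to-weak continuous
  have hDc : WStarWeakCont 𝕜 fun m => D m := hwc D hder
  refine ⟨x, fun m => ?_⟩
  refine ContinuousLinearMap.ext fun φ => ?_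
  -- the two functionals on A
  set χ₁ : Du 𝕜 A := adj 𝕜 (adj 𝕜 M.l) (inDu 𝕜 B x) φ with hχ₁
  set χ₂ : Du 𝕜 A := adj 𝕜 M.r φ x with hχ₂
  -- the scalar-valued functional witnessing the difference
  set K : Bi 𝕜 A →ₗ[𝕜] 𝕜 :=
    (φ.comp D).toLinearMap - (topDualPairing 𝕜 (Du 𝕜 A)).flip χ₁
      + (topDualPairing 𝕜 (Du 𝕜 A)).flip χ₂ with hK
  have hKapp : ∀ n : Bi 𝕜 A, K n = φ (D n) - n χ₁ + n χ₂ := fun _ => rfl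
  -- K is weak-star continuous
  have hKc : Continuous fun n : WeakDual 𝕜 (Du 𝕜 A) => K (show Bi 𝕜 A from n) := by
    have c1 : Continuous fun n : WeakDual 𝕜 (Du 𝕜 A) =>
        φ (D (show Bi 𝕜 A from n)) := by
      exact (WeakBilin.eval_continuous ((topDualPairing 𝕜 B).flip) φ).comp hDc
    have c2 : Continuous fun n : WeakDual 𝕜 (Du 𝕜 A) => (show Bi 𝕜 A from n) χ₁ :=
      WeakDual.eval_continuous χ₁
    have c3 : Continuous fun n : WeakDual 𝕜 (Du 𝕜 A) => (show Bi 𝕜 A from n) χ₂ :=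
      WeakDual.eval_continuous χ₂
    exact (c1.sub c2).add c3
  -- K vanishes on the canonical image of A
  have hKv : ∀ a : A, K (inDu 𝕜 A a) = 0 := by
    intro a
    have e : K (inDu 𝕜 A a) = φ (d a) - φ (M.l a x) + φ (M.r x a) := rfl
    rw [e, hx a, map_sub]
    ring
  have hKm := wstar_fun_zero K hKc hKv m
  rw [hKapp m] at hKm
  rw [ContinuousLinearMap.sub_apply]
  have e1 : ar1 𝕜 M.l m (inDu 𝕜 B x) φ = m χ₁ := rfl
  have e2 : ar1 𝕜 M.r (inDu 𝕜 B x) m φ = m χ₂ := rfl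
  have e0 : inDu 𝕜 B (D m) φ = φ (D m) := rfl
  rw [e0, e1, e2]
  linear_combination hKm


end ArensPaper
end
end

section
/- Let A be an amenable and Arens regular Banach algebra. If B is a normal dual Banach A-bimodule with predual X such that A·B* ⊆ X and B*·A ⊆ X, then H^1_{w*}(A**, B**) = {0}. -/
/-!
Common definitions: duals, biduals, Arens products, module actions,
derivations, first cohomology-vanishing predicates, weak-star continuity.
-/

noncomputable section

open ContinuousLinearMap Filter Topology Function

namespace ArensPaper

variable (𝕜 : Type) [RCLike 𝕜]

variable {X Y Z : Type} [NormedAddCommGroup X] [NormedSpace 𝕜 X]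
  [NormedAddCommGroup Y] [NormedSpace 𝕜 Y] [NormedAddCommGroup Z] [NormedSpace 𝕜 Z]

set_option maxHeartbeats 2000000 in
/-- A weak*-continuous linear functional on a bidual which vanishes on the canonical
image of the original space vanishes everywhere. -/
theorem weakstar_vanish {𝕜 : Type} [RCLike 𝕜] {A : Type} [NormedAddCommGroup A]
    [NormedSpace 𝕜 A] (Ψ : Bi 𝕜 A →ₗ[𝕜] 𝕜)
    (hc : Continuous fun n : WeakDual 𝕜 (Du 𝕜 A) => Ψ (show Bi 𝕜 A from n))
    (h0 : ∀ a : A, Ψ (inDu 𝕜 A a) = 0) (m : Bi 𝕜 A) : Ψ m = 0 := by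
  classical
  have hmem : (fun n : WeakDual 𝕜 (Du 𝕜 A) => Ψ (show Bi 𝕜 A from n)) ⁻¹'
      Metric.ball (0:𝕜) 1 ∈ 𝓝 (0 : WeakDual 𝕜 (Du 𝕜 A)) := by
    apply hc.continuousAt.preimage_mem_nhds
    rw [show Ψ (show Bi 𝕜 A from (0 : WeakDual 𝕜 (Du 𝕜 A))) = 0 from map_zero Ψ]
    exact Metric.ball_mem_nhds 0 one_pos
  obtain ⟨U, hU, hUsub⟩ :=
    (LinearMap.hasBasis_weakBilin (E := Bi 𝕜 A) (F := Du 𝕜 A) (topDualPairing 𝕜 (Du 𝕜 A))).mem_iff.1 hmem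
  obtain ⟨s, r, hr, rfl⟩ := (SeminormFamily.basisSets_iff _).1 hU
  set p := LinearMap.toSeminormFamily (E := Bi 𝕜 A) (F := Du 𝕜 A) (topDualPairing 𝕜 (Du 𝕜 A)) with hp
  have key : ∀ n : Bi 𝕜 A, (∀ φ ∈ s, n φ = 0) → Ψ n = 0 := by
    intro n hn
    have hz : (s.sup p) n = 0 := by
      refine le_antisymm (Seminorm.finset_sup_apply_le le_rfl ?_) (apply_nonneg _ _)
      intro φ hφ
      show p φ n ≤ 0
      rw [hp, LinearMap.toSeminormFamily_apply]
      simp [topDualPairing, hn φ hφ]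
    by_contra hne
    set t : 𝕜 := ((2 / ‖Ψ n‖ : ℝ) : 𝕜) with ht
    have hmem2 : (t • n) ∈ Seminorm.ball (s.sup p) (0 : Bi 𝕜 A) r := by
      rw [Seminorm.mem_ball_zero, map_smul_eq_mul, hz, mul_zero]; exact hr
    have h1 := hUsub hmem2
    simp only [Set.mem_preimage, Metric.mem_ball, dist_zero_right] at h1
    have h2 : ‖t • Ψ n‖ < 1 := by
      rw [← map_smul Ψ t n]
      have h1' : Ψ (t • n) ∈ Metric.ball (0:𝕜) 1 := h1
      rwa [Metric.mem_ball, dist_zero_right] at h1'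
    rw [norm_smul] at h2
    have hΨ : 0 < ‖Ψ n‖ := norm_pos_iff.mpr hne
    have hnt : ‖t‖ = 2 / ‖Ψ n‖ := by
      rw [ht, RCLike.norm_ofReal, abs_of_pos (by positivity)]
    rw [hnt, div_mul_cancel₀ _ (ne_of_gt hΨ)] at h2
    norm_num at h2
  have hker : ⨅ φ : {φ // φ ∈ s},
      LinearMap.ker ((inDu 𝕜 (Du 𝕜 A) φ.1 : Bi 𝕜 A →L[𝕜] 𝕜) : Bi 𝕜 A →ₗ[𝕜] 𝕜)
      ≤ LinearMap.ker Ψ := by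
    intro n hn
    simp only [Submodule.mem_iInf, LinearMap.mem_ker] at hn ⊢
    exact key n fun φ hφ => hn ⟨φ, hφ⟩
  have hspan : Ψ ∈ Submodule.span 𝕜 (Set.range fun φ : {φ // φ ∈ s} =>
      ((inDu 𝕜 (Du 𝕜 A) φ.1 : Bi 𝕜 A →L[𝕜] 𝕜) : Bi 𝕜 A →ₗ[𝕜] 𝕜)) :=
    mem_span_of_iInf_ker_le_ker hker
  obtain ⟨c, hcc⟩ := (Submodule.mem_span_range_iff_exists_fun 𝕜).1 hspan
  set φ0 : Du 𝕜 A := ∑ φ : {φ // φ ∈ s}, c φ • (φ.1 : Du 𝕜 A) with hφ0def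
  have hΨeq : ∀ n : Bi 𝕜 A, Ψ n = n φ0 := by
    intro n
    rw [← hcc, hφ0def, map_sum]
    simp only [LinearMap.coe_sum, Finset.sum_apply, LinearMap.smul_apply,
      ContinuousLinearMap.coe_coe, map_smul]
    rfl
  have hφ0 : φ0 = 0 := by
    ext a
    have h := h0 a
    rw [hΨeq (inDu 𝕜 A a)] at h
    simpa using h
  rw [hΨeq m, hφ0, map_zero]

set_option maxHeartbeats 2000000 in
/-- Let `A` be an amenable and Arens regular Banach algebra.  If `B = X*` is a normal dual
Banach `A`-bimodule with predual `X` such that `A·B* ⊆ X` and `B*·A ⊆ X`, then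
`H^1_{w*}(A**, B**) = {0}`. -/
theorem statement7 {𝕜 : Type} [RCLike 𝕜] {A : Type}
    [NonUnitalNormedRing A] [NormedSpace 𝕜 A] [IsScalarTower 𝕜 A A]
    [SMulCommClass 𝕜 A A] [CompleteSpace A]
    {X : Type} [NormedAddCommGroup X] [NormedSpace 𝕜 X] [CompleteSpace X]
    -- `B = X*` is a dual Banach `A`-bimodule with predual `X`
    (M : BimodStr 𝕜 (ContinuousLinearMap.mul 𝕜 A) (Du 𝕜 X))
    -- `A` is amenable
    (hamen : IsAmenableP 𝕜 (ContinuousLinearMap.mul 𝕜 A))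
    -- `A` is Arens regular
    (hreg : ArensRegularBil 𝕜 (ContinuousLinearMap.mul 𝕜 A))
    -- `B` is a normal dual bimodule
    (hnormal : ∀ f : Du 𝕜 X,
      (Continuous fun a : A => (show WeakDual 𝕜 X from M.l a f)) ∧
      (Continuous fun a : A => (show WeakDual 𝕜 X from M.r f a)))
    -- `A·B* ⊆ X` and `B*·A ⊆ X`
    (hsub : ∀ (a : A) (F : Bi 𝕜 X),
      F.comp (M.r.flip a) ∈ Set.range (inDu 𝕜 X) ∧
      F.comp (M.l a) ∈ Set.range (inDu 𝕜 X)) :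
    -- `H^1_{w*}(A**, B**) = {0}`
    ∀ D : Bi 𝕜 A →L[𝕜] Bi 𝕜 (Du 𝕜 X),
      IsDer 𝕜 (fun m n => ar1 𝕜 (ContinuousLinearMap.mul 𝕜 A) m n)
        (fun (m : Bi 𝕜 A) (F : Bi 𝕜 (Du 𝕜 X)) => ar1 𝕜 M.l m F)
        (fun (F : Bi 𝕜 (Du 𝕜 X)) (m : Bi 𝕜 A) => ar1 𝕜 M.r F m) D →
      WStarCont 𝕜 (fun m => D m) →
      IsInner 𝕜 (fun (m : Bi 𝕜 A) (F : Bi 𝕜 (Du 𝕜 X)) => ar1 𝕜 M.l m F)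
        (fun (F : Bi 𝕜 (Du 𝕜 X)) (m : Bi 𝕜 A) => ar1 𝕜 M.r F m) D := by
  intro D hder hwst
  classical
  -- the predual bimodule structure on `B* = X**`
  let trL : (Du 𝕜 X →L[𝕜] Du 𝕜 X) →L[𝕜] (Bi 𝕜 X →L[𝕜] Bi 𝕜 X) :=
    (compL 𝕜 (Du 𝕜 X) (Du 𝕜 X) 𝕜).flip
  let N : BimodStr 𝕜 (ContinuousLinearMap.mul 𝕜 A) (Bi 𝕜 X) :=
    { l := trL.comp M.r.flip
      r := (trL.comp M.l).flip
      l_mul := by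
        intro a b ψ
        ext f
        exact congrArg ψ (M.r_mul f a b).symm
      r_mul := by
        intro ψ a b
        ext f
        exact congrArg ψ (M.l_mul a b f).symm
      lr := by
        intro a ψ b
        ext f
        exact congrArg ψ (M.lr b f a) }
  let MB : BBimod 𝕜 (ContinuousLinearMap.mul 𝕜 A) := { E := Bi 𝕜 X, str := N }
  let Dr : A →L[𝕜] Du 𝕜 MB.E := D.comp (inDu 𝕜 A)
  have hL1 : ∀ a b : A, ar1 𝕜 (ContinuousLinearMap.mul 𝕜 A) (inDu 𝕜 A a) (inDu 𝕜 A b)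
      = inDu 𝕜 A (a * b) := by
    intro a b; ext φ; rfl
  have hL2 : ∀ (a : A) (F : Bi 𝕜 (Du 𝕜 X)),
      ar1 𝕜 M.l (inDu 𝕜 A a) F = F.comp (N.r.flip a) := by
    intro a F; ext ψ; rfl
  have hL3 : ∀ (a : A) (F : Bi 𝕜 (Du 𝕜 X)),
      ar1 𝕜 M.r F (inDu 𝕜 A a) = F.comp (N.l a) := by
    intro a F; ext ψ; rfl
  have hDr : IsDer 𝕜 (fun a b => ContinuousLinearMap.mul 𝕜 A a b)
      (fun a f => f.comp (MB.str.r.flip a)) (fun f a => f.comp (MB.str.l a)) Dr := by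
    intro a b
    have h := hder (inDu 𝕜 A a) (inDu 𝕜 A b)
    beta_reduce at h
    rw [hL1 a b] at h
    calc Dr (ContinuousLinearMap.mul 𝕜 A a b) = D (inDu 𝕜 A (a * b)) := rfl
    _ = ar1 𝕜 M.l (inDu 𝕜 A a) (D (inDu 𝕜 A b))
        + ar1 𝕜 M.r (D (inDu 𝕜 A a)) (inDu 𝕜 A b) := h
    _ = _ := by rw [hL2, hL3]; rfl
  obtain ⟨F₀, hF₀⟩ := hamen MB Dr hDr
  let f₀ : Du 𝕜 X := F₀.comp (inDu 𝕜 X)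
  set x : Bi 𝕜 (Du 𝕜 X) := inDu 𝕜 (Du 𝕜 X) f₀ with hxdef
  have hA2 : ∀ a : A, F₀.comp (N.r.flip a) = ar1 𝕜 M.l (inDu 𝕜 A a) x := by
    intro a
    ext ψ
    obtain ⟨x₁, hx₁⟩ := (hsub a ψ).2
    have l1 : (F₀.comp (N.r.flip a)) ψ = F₀ (ψ.comp (M.l a)) := rfl
    have l2 : ar1 𝕜 M.l (inDu 𝕜 A a) x ψ = (ψ.comp (M.l a)) f₀ := rfl
    rw [l1, l2, ← hx₁]
    rfl
  have hA3 : ∀ a : A, F₀.comp (N.l a) = ar1 𝕜 M.r x (inDu 𝕜 A a) := by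
    intro a
    ext ψ
    obtain ⟨x₂, hx₂⟩ := (hsub a ψ).1
    have l1 : (F₀.comp (N.l a)) ψ = F₀ (ψ.comp (M.r.flip a)) := rfl
    have l2 : ar1 𝕜 M.r x (inDu 𝕜 A a) ψ = (ψ.comp (M.r.flip a)) f₀ := rfl
    rw [l1, l2, ← hx₂]
    rfl
  set δ : Bi 𝕜 A →L[𝕜] Bi 𝕜 (Du 𝕜 X) := (ar1 𝕜 M.l).flip x - ar1 𝕜 M.r x with hδdef
  have hAgree : ∀ a : A, D (inDu 𝕜 A a) = δ (inDu 𝕜 A a) := by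
    intro a
    calc D (inDu 𝕜 A a) = Dr a := rfl
    _ = F₀.comp (N.r.flip a) - F₀.comp (N.l a) := hF₀ a
    _ = ar1 𝕜 M.l (inDu 𝕜 A a) x - ar1 𝕜 M.r x (inDu 𝕜 A a) := by rw [hA2, hA3]
    _ = δ (inDu 𝕜 A a) := by
        rw [hδdef]
        simp only [ContinuousLinearMap.sub_apply, ContinuousLinearMap.flip_apply]
  have hfinal : ∀ m : Bi 𝕜 A, D m = δ m := by
    intro m
    ext ψ
    let Ψ : Bi 𝕜 A →ₗ[𝕜] 𝕜 := ((inDu 𝕜 (Bi 𝕜 X) ψ).comp (D - δ)).toLinearMap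
    have hc : Continuous fun n : WeakDual 𝕜 (Du 𝕜 A) => Ψ (show Bi 𝕜 A from n) := by
      have h1 : Continuous fun n : WeakDual 𝕜 (Du 𝕜 A) =>
          (D (show Bi 𝕜 A from n)) ψ := (WeakDual.eval_continuous ψ).comp hwst
      have h2 : Continuous fun n : WeakDual 𝕜 (Du 𝕜 A) =>
          (show Bi 𝕜 A from n) (x.comp (adj 𝕜 M.l ψ)) := WeakDual.eval_continuous _
      have h3 : Continuous fun n : WeakDual 𝕜 (Du 𝕜 A) =>
          (show Bi 𝕜 A from n) (adj 𝕜 M.r ψ f₀) := WeakDual.eval_continuous _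
      have heq : (fun n : WeakDual 𝕜 (Du 𝕜 A) => Ψ (show Bi 𝕜 A from n)) =
          fun n : WeakDual 𝕜 (Du 𝕜 A) => (D (show Bi 𝕜 A from n)) ψ -
            ((show Bi 𝕜 A from n) (x.comp (adj 𝕜 M.l ψ)) -
              (show Bi 𝕜 A from n) (adj 𝕜 M.r ψ f₀)) := by
        funext n
        rfl
      rw [heq]
      exact h1.sub (h2.sub h3)
    have h0 : ∀ a : A, Ψ (inDu 𝕜 A a) = 0 := by
      intro a
      have hz : (D - δ) (inDu 𝕜 A a) = 0 := by
        rw [ContinuousLinearMap.sub_apply, hAgree a, sub_self]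
      show (inDu 𝕜 (Bi 𝕜 X) ψ) ((D - δ) (inDu 𝕜 A a)) = 0
      rw [hz, map_zero]
    have hv := weakstar_vanish Ψ hc h0 m
    have hv' : D m ψ - δ m ψ = 0 := hv
    exact sub_eq_zero.mp hv'
  refine ⟨x, fun m => ?_⟩
  rw [hfinal m, hδdef]
  simp only [ContinuousLinearMap.sub_apply, ContinuousLinearMap.flip_apply]


end ArensPaper
end
end

section
/- Let A be an Arens regular dual Banach algebra such that A* is weakly sequentially complete. If H^1_{w*}(A**, A***) = {0}, then H^1_{w*}(A, A*) = {0}. -/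
/-!
Common definitions: duals, biduals, Arens products, module actions,
derivations, first cohomology-vanishing predicates, weak-star continuity.
-/

noncomputable section

open ContinuousLinearMap Filter Topology Function

namespace ArensPaper

variable (𝕜 : Type) [RCLike 𝕜]

variable {X Y Z : Type} [NormedAddCommGroup X] [NormedSpace 𝕜 X]
  [NormedAddCommGroup Y] [NormedSpace 𝕜 Y] [NormedAddCommGroup Z] [NormedSpace 𝕜 Z]

section Statement11Aux

set_option linter.unusedSectionVars false

variable {𝕜 : Type} [RCLike 𝕜] {A : Type}
    [NonUnitalNormedRing A] [NormedSpace 𝕜 A] [IsScalarTower 𝕜 A A]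
    [SMulCommClass 𝕜 A A]
    {X : Type} [NormedAddCommGroup X] [NormedSpace 𝕜 X]

/-- The embedding of the predual into the dual, as a continuous linear map. -/
def epsL (j : A ≃ₗᵢ[𝕜] Du 𝕜 X) : X →L[𝕜] Du 𝕜 A :=
  (tr 𝕜 j.toLinearIsometry.toContinuousLinearMap).comp (inDu 𝕜 X)

lemma epsL_apply (j : A ≃ₗᵢ[𝕜] Du 𝕜 X) (x : X) (a : A) :
    epsL j x a = j a x := rfl

/-- The canonical projection from the bidual onto a dual Banach algebra. -/
def piL (j : A ≃ₗᵢ[𝕜] Du 𝕜 X) : Bi 𝕜 A →L[𝕜] A :=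
  (j.symm.toLinearIsometry.toContinuousLinearMap).comp (tr 𝕜 (epsL j))

lemma j_piL (j : A ≃ₗᵢ[𝕜] Du 𝕜 X) (F : Bi 𝕜 A) (x : X) :
    j (piL j F) x = F (epsL j x) := by
  have h : j (piL j F) = tr 𝕜 (epsL j) F := j.apply_symm_apply _
  rw [h]; rfl

lemma piL_inDu (j : A ≃ₗᵢ[𝕜] Du 𝕜 X) (a : A) : piL j (inDu 𝕜 A a) = a := by
  have h : tr 𝕜 (epsL j) (inDu 𝕜 A a) = j a := by ext x; rfl
  show j.symm (tr 𝕜 (epsL j) (inDu 𝕜 A a)) = a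
  rw [h, j.symm_apply_apply]

lemma ar1_inDu_inDu (a b : A) :
    ar1 𝕜 (ContinuousLinearMap.mul 𝕜 A) (inDu 𝕜 A a) (inDu 𝕜 A b)
      = inDu 𝕜 A (a * b) := by
  ext f; rfl

/-- The projection `piL` is an algebra homomorphism for the first Arens product. -/
lemma piL_hom (j : A ≃ₗᵢ[𝕜] Du 𝕜 X) (hdual : IsDualBanachAlgebra 𝕜 j)
    (F G : Bi 𝕜 A) :
    piL j (ar1 𝕜 (ContinuousLinearMap.mul 𝕜 A) F G) = piL j F * piL j G := by
  apply j.injective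
  ext x
  rw [j_piL]
  obtain ⟨z, hz⟩ := (hdual (piL j G) x).1
  have hz' : epsL j z
      = (epsL j x).comp ((ContinuousLinearMap.mul 𝕜 A).flip (piL j G)) := hz
  have hfun : (adj 𝕜 (adj 𝕜 (ContinuousLinearMap.mul 𝕜 A))) G (epsL j x)
      = (epsL j x).comp ((ContinuousLinearMap.mul 𝕜 A).flip (piL j G)) := by
    ext a
    obtain ⟨y, hy⟩ := (hdual a x).2
    have hy' : epsL j y = (epsL j x).comp (ContinuousLinearMap.mul 𝕜 A a) := hy
    show G ((epsL j x).comp (ContinuousLinearMap.mul 𝕜 A a)) = _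
    rw [← hy', ← j_piL j G y, ← epsL_apply j y (piL j G), hy']
    rfl
  show F ((adj 𝕜 (adj 𝕜 (ContinuousLinearMap.mul 𝕜 A))) G (epsL j x)) = _
  rw [hfun, ← hz', ← j_piL j F z, ← epsL_apply j z (piL j F), hz']
  rfl

end Statement11Aux
set_option maxHeartbeats 1000000 in
/-- Let `A` be an Arens regular dual Banach algebra (with predual `X`) such that `A*` is
weakly sequentially complete.  If `H^1_{w*}(A**, A***) = {0}`, then
`H^1_{w*}(A, A*) = {0}`. -/
theorem statement11 {𝕜 : Type} [RCLike 𝕜] {A : Type}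
    [NonUnitalNormedRing A] [NormedSpace 𝕜 A] [IsScalarTower 𝕜 A A]
    [SMulCommClass 𝕜 A A] [CompleteSpace A]
    {X : Type} [NormedAddCommGroup X] [NormedSpace 𝕜 X] [CompleteSpace X]
    -- `A` is a dual Banach algebra with predual `X`
    (j : A ≃ₗᵢ[𝕜] Du 𝕜 X) (hdual : IsDualBanachAlgebra 𝕜 j)
    -- `A` is Arens regular
    (hreg : ArensRegularBil 𝕜 (ContinuousLinearMap.mul 𝕜 A))
    -- `A*` is weakly sequentially complete
    (hwsc : WSCSpace 𝕜 (Du 𝕜 A))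
    -- `H^1_{w*}(A**, A***) = {0}`
    (h1 : ∀ D : Bi 𝕜 A →L[𝕜] Du 𝕜 (Bi 𝕜 A),
      IsDer 𝕜 (fun m n => ar1 𝕜 (ContinuousLinearMap.mul 𝕜 A) m n)
        (fun (m : Bi 𝕜 A) (F : Du 𝕜 (Bi 𝕜 A)) =>
          F.comp ((ar1 𝕜 (ContinuousLinearMap.mul 𝕜 A)).flip m))
        (fun (F : Du 𝕜 (Bi 𝕜 A)) (m : Bi 𝕜 A) =>
          F.comp (ar1 𝕜 (ContinuousLinearMap.mul 𝕜 A) m)) D →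
      WStarCont 𝕜 (fun m => D m) →
      IsInner 𝕜
        (fun (m : Bi 𝕜 A) (F : Du 𝕜 (Bi 𝕜 A)) =>
          F.comp ((ar1 𝕜 (ContinuousLinearMap.mul 𝕜 A)).flip m))
        (fun (F : Du 𝕜 (Bi 𝕜 A)) (m : Bi 𝕜 A) =>
          F.comp (ar1 𝕜 (ContinuousLinearMap.mul 𝕜 A) m)) D) :
    -- `H^1_{w*}(A, A*) = {0}`
    ∀ D : A →L[𝕜] Du 𝕜 A,
      IsDer 𝕜 (fun a b => a * b)
        (fun (a : A) (f : Du 𝕜 A) => f.comp ((ContinuousLinearMap.mul 𝕜 A).flip a))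
        (fun (f : Du 𝕜 A) (a : A) => f.comp (ContinuousLinearMap.mul 𝕜 A a)) D →
      -- `D` is weak*-weak*-continuous (for the weak* topology of `A` induced by `X`)
      (Continuous fun x : WeakDual 𝕜 X =>
        (show WeakDual 𝕜 A from D (j.symm (show Du 𝕜 X from x)))) →
      IsInner 𝕜
        (fun (a : A) (f : Du 𝕜 A) => f.comp ((ContinuousLinearMap.mul 𝕜 A).flip a))
        (fun (f : Du 𝕜 A) (a : A) => f.comp (ContinuousLinearMap.mul 𝕜 A a)) D := by
  intro D hD hcont
  set p := ar1 𝕜 (ContinuousLinearMap.mul 𝕜 A) with hp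
  set Dt : Bi 𝕜 A →L[𝕜] Du 𝕜 (Bi 𝕜 A) :=
    (tr 𝕜 (piL j)).comp (D.comp (piL j)) with hDtdef
  have hDt : ∀ (m H : Bi 𝕜 A), Dt m H = D (piL j m) (piL j H) := fun m H => rfl
  have hder : IsDer 𝕜 (fun m n => p m n)
      (fun (m : Bi 𝕜 A) (F : Du 𝕜 (Bi 𝕜 A)) => F.comp (p.flip m))
      (fun (F : Du 𝕜 (Bi 𝕜 A)) (m : Bi 𝕜 A) => F.comp (p m)) Dt := by
    intro m n
    have hmul := hD (piL j m) (piL j n)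
    ext H
    show D (piL j (p m n)) (piL j H) = _
    rw [hp, piL_hom j hdual m n, hmul]
    simp only [ContinuousLinearMap.add_apply, ContinuousLinearMap.comp_apply,
      ContinuousLinearMap.flip_apply, ContinuousLinearMap.mul_apply']
    rw [hDt, hDt, piL_hom j hdual H m, piL_hom j hdual n H]
  have hwst : WStarCont 𝕜 (fun m : Bi 𝕜 A => Dt m) := by
    unfold WStarCont
    refine WeakDual.continuous_of_continuous_eval fun M => ?_
    have hc1 : Continuous fun m : WeakDual 𝕜 (Du 𝕜 A) =>
        (show WeakDual 𝕜 X from tr 𝕜 (epsL j) (show Du 𝕜 (Du 𝕜 A) from m)) := by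
      refine WeakDual.continuous_of_continuous_eval fun x => ?_
      exact WeakDual.eval_continuous (epsL j x)
    have hc2 := hcont.comp hc1
    exact (WeakDual.eval_continuous (piL j M)).comp hc2
  obtain ⟨Φ, hΦ⟩ := h1 Dt hder hwst
  refine ⟨Φ.comp (inDu 𝕜 A), fun a => ?_⟩
  ext b
  have h2 := congrArg (fun T : Du 𝕜 (Bi 𝕜 A) => T (inDu 𝕜 A b)) (hΦ (inDu 𝕜 A a))
  simp only [ContinuousLinearMap.sub_apply, ContinuousLinearMap.comp_apply,
    ContinuousLinearMap.flip_apply] at h2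
  rw [hDt, piL_inDu, piL_inDu, hp, ar1_inDu_inDu, ar1_inDu_inDu] at h2
  simp only [ContinuousLinearMap.sub_apply, ContinuousLinearMap.comp_apply,
    ContinuousLinearMap.flip_apply, ContinuousLinearMap.mul_apply']
  exact h2

end ArensPaper
end
end

section
/- Let A be a Banach algebra and n ≥ 0 an integer. If the 2n-th dual A^{(2n)} (a Banach algebra via the iterated first Arens products) is a two-sided ideal in A^{(2n+2)} and A^{(2n+1)} factors as a Banach A^{(2n)}-bimodule (A^{(2n+1)} = A^{(2n+1)}·A^{(2n)} = A^{(2n)}·A^{(2n+1)}), then A^{(2n)} is Arens regular. -/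
/-!
Common definitions: duals, biduals, Arens products, module actions,
derivations, first cohomology-vanishing predicates, weak-star continuity.
-/

noncomputable section

open ContinuousLinearMap Filter Topology Function

namespace ArensPaper

variable (𝕜 : Type) [RCLike 𝕜]

variable {X Y Z : Type} [NormedAddCommGroup X] [NormedSpace 𝕜 X]
  [NormedAddCommGroup Y] [NormedSpace 𝕜 Y] [NormedAddCommGroup Z] [NormedSpace 𝕜 Z]

/-- A bundled "Banach algebra": a normed space together with a continuous bilinear
multiplication. -/
structure BAlg (𝕜 : Type) [RCLike 𝕜] : Type 1 where
  X : Type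
  [grp : NormedAddCommGroup X]
  [mod : NormedSpace 𝕜 X]
  p : X →L[𝕜] X →L[𝕜] X

attribute [instance] BAlg.grp BAlg.mod

/-- The bidual of a bundled Banach algebra, with the first Arens product. -/
def BAlg.bidual {𝕜 : Type} [RCLike 𝕜] (C : BAlg 𝕜) : BAlg 𝕜 :=
  { X := Bi 𝕜 C.X, p := ar1 𝕜 C.p }

/-- The iterated even duals `A^{(2n)}` of a bundled Banach algebra, with the iterated
first Arens products. -/
def evenDual {𝕜 : Type} [RCLike 𝕜] (C : BAlg 𝕜) : ℕ → BAlg 𝕜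
  | 0 => C
  | n + 1 => (evenDual C n).bidual

section MyAux

variable {𝕜 : Type} [RCLike 𝕜] {W : Type} [NormedAddCommGroup W] [NormedSpace 𝕜 W]

/-- The first Arens extension of an associative product is associative. -/
lemma my_ar1_assoc (m : W →L[𝕜] W →L[𝕜] W)
    (hm : ∀ a b c, m (m a b) c = m a (m b c)) (F G H : Bi 𝕜 W) :
    ar1 𝕜 m (ar1 𝕜 m F G) H = ar1 𝕜 m F (ar1 𝕜 m G H) := by
  ext f
  show F (adj 𝕜 (adj 𝕜 m) G (adj 𝕜 (adj 𝕜 m) H f))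
      = F (adj 𝕜 (adj 𝕜 m) (ar1 𝕜 m G H) f)
  refine congrArg F ?_
  ext x
  show G (adj 𝕜 m (adj 𝕜 (adj 𝕜 m) H f) x) = G (adj 𝕜 (adj 𝕜 m) H (adj 𝕜 m f x))
  refine congrArg G ?_
  ext y
  show H (adj 𝕜 m f (m x y)) = H (adj 𝕜 m (adj 𝕜 m f x) y)
  refine congrArg H ?_
  ext z
  show f (m (m x y) z) = f (m x (m y z))
  exact congrArg f (hm x y z)

/-- All iterated first Arens products are associative if the base product is. -/
lemma my_evenDual_assoc (C : BAlg 𝕜)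
    (h : ∀ a b c, C.p (C.p a b) c = C.p a (C.p b c)) :
    ∀ n, ∀ a b c, (evenDual C n).p ((evenDual C n).p a b) c
      = (evenDual C n).p a ((evenDual C n).p b c)
  | 0 => h
  | n + 1 => fun a b c =>
      my_ar1_assoc (𝕜 := 𝕜) (evenDual C n).p (my_evenDual_assoc C h n) a b c

end MyAux

/-- Let `A` be a Banach algebra and `n ≥ 0`.  If `A^{(2n)}` (with the iterated first Arens
product) is a two-sided ideal in `A^{(2n+2)}` and `A^{(2n+1)}` factors as a Banach
`A^{(2n)}`-bimodule, then `A^{(2n)}` is Arens regular. -/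
theorem statement12 {𝕜 : Type} [RCLike 𝕜] {A : Type}
    [NonUnitalNormedRing A] [NormedSpace 𝕜 A] [IsScalarTower 𝕜 A A]
    [SMulCommClass 𝕜 A A] [CompleteSpace A] (n : ℕ)
    -- `C = A^{(2n)}`
    (C : BAlg 𝕜) (hC : C = evenDual { X := A, p := ContinuousLinearMap.mul 𝕜 A } n)
    -- `A^{(2n)}` is a two-sided ideal in `A^{(2n+2)}`
    (hideal : ∀ (m : Bi 𝕜 C.X) (a : C.X),
      ar1 𝕜 C.p m (inDu 𝕜 C.X a) ∈ Set.range (inDu 𝕜 C.X) ∧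
      ar1 𝕜 C.p (inDu 𝕜 C.X a) m ∈ Set.range (inDu 𝕜 C.X))
    -- `A^{(2n+1)}` factors: `A^{(2n+1)} = A^{(2n+1)}·A^{(2n)} = A^{(2n)}·A^{(2n+1)}`
    (hfac : ∀ f : Du 𝕜 C.X,
      (∃ (g : Du 𝕜 C.X) (a : C.X), f = g.comp (C.p a)) ∧
      (∃ (a : C.X) (g : Du 𝕜 C.X), f = g.comp (C.p.flip a))) :
    -- `A^{(2n)}` is Arens regular
    ArensRegularBil 𝕜 C.p := by
  have hassoc : ∀ a b c : C.X, C.p (C.p a b) c = C.p a (C.p b c) := by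
    subst hC
    exact my_evenDual_assoc _ (fun a b c => mul_assoc a b c) n
  show ar1 𝕜 C.p = ar2 𝕜 C.p
  ext F G f
  obtain ⟨g, a₀, hf⟩ := (hfac f).1
  obtain ⟨c, hc⟩ := (hideal F a₀).2
  -- key property coming from the ideal hypothesis:
  have key : ∀ f' : Du 𝕜 C.X, F (adj 𝕜 C.p f' a₀) = f' c := by
    intro f'
    calc F (adj 𝕜 C.p f' a₀) = ar1 𝕜 C.p (inDu 𝕜 C.X a₀) F f' := rfl
      _ = inDu 𝕜 C.X c f' := by rw [hc]
      _ = f' c := rfl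
  have hLHS : ar1 𝕜 C.p F G f = G (adj 𝕜 C.p g c) := by
    have e1 : adj 𝕜 (adj 𝕜 C.p) G f
        = adj 𝕜 C.p (G.comp (adj 𝕜 C.p g)) a₀ := by
      ext x
      show G (adj 𝕜 C.p f x) = G (adj 𝕜 C.p g (C.p a₀ x))
      refine congrArg G ?_
      ext y
      show f (C.p x y) = g (C.p (C.p a₀ x) y)
      rw [hf]
      show g (C.p a₀ (C.p x y)) = g (C.p (C.p a₀ x) y)
      rw [hassoc]
    calc ar1 𝕜 C.p F G f = F (adj 𝕜 (adj 𝕜 C.p) G f) := rfl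
      _ = F (adj 𝕜 C.p (G.comp (adj 𝕜 C.p g)) a₀) := by rw [e1]
      _ = (G.comp (adj 𝕜 C.p g)) c := key _
      _ = G (adj 𝕜 C.p g c) := rfl
  have hRHS : ar2 𝕜 C.p F G f = G (adj 𝕜 C.p g c) := by
    have e2 : adj 𝕜 (adj 𝕜 C.p.flip) F f = adj 𝕜 C.p g c := by
      ext y
      show F (adj 𝕜 C.p.flip f y) = g (C.p c y)
      have e3 : adj 𝕜 C.p.flip f y
          = adj 𝕜 C.p (adj 𝕜 C.p.flip g y) a₀ := by
        ext x
        show f (C.p x y) = g (C.p (C.p a₀ x) y)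
        rw [hf]
        show g (C.p a₀ (C.p x y)) = g (C.p (C.p a₀ x) y)
        rw [hassoc]
      rw [e3]
      exact key _
    calc ar2 𝕜 C.p F G f = G (adj 𝕜 (adj 𝕜 C.p.flip) F f) := rfl
      _ = G (adj 𝕜 C.p g c) := by rw [e2]
  rw [hLHS, hRHS]

end ArensPaper
end
end

section
/- Let A be a Banach algebra such that A** is a two-sided ideal in the fourth dual A^{(4)} and A*** factors as a Banach A**-bimodule (A*** = A***·A** = A**·A***). If A is weakly amenable, then H^1_{w*}(A**, A***) = {0}. -/
/-!
Common definitions: duals, biduals, Arens products, module actions,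
derivations, first cohomology-vanishing predicates, weak-star continuity.
-/

noncomputable section

open ContinuousLinearMap Filter Topology Function

namespace ArensPaper

variable (𝕜 : Type) [RCLike 𝕜]

variable {X Y Z : Type} [NormedAddCommGroup X] [NormedSpace 𝕜 X]
  [NormedAddCommGroup Y] [NormedSpace 𝕜 Y] [NormedAddCommGroup Z] [NormedSpace 𝕜 Z]

section
set_option linter.unusedSectionVars false
open NormedSpace
variable {𝕜 : Type} [RCLike 𝕜]
variable {X : Type} [NormedAddCommGroup X] [NormedSpace 𝕜 X]

/-- A weak-star continuous linear functional on a dual space is an evaluation. -/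
lemma exists_eval (ℓ : Du 𝕜 X →L[𝕜] 𝕜)
    (hc : Continuous fun m : WeakDual 𝕜 X => ℓ m) :
    ∃ x : X, ∀ m : Du 𝕜 X, ℓ m = m x := by
  classical
  set B := topDualPairing 𝕜 X
  have hU : (fun m : WeakDual 𝕜 X => ℓ m) ⁻¹' (Metric.ball (0 : 𝕜) 1) ∈ 𝓝 (0 : WeakDual 𝕜 X) := by
    refine hc.continuousAt.preimage_mem_nhds ?_
    convert Metric.ball_mem_nhds (0 : 𝕜) one_pos using 2
    exact map_zero ℓ
  obtain ⟨V, hV, hVU⟩ := (LinearMap.hasBasis_weakBilin B).mem_iff.1 hU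
  obtain ⟨s, r, hr, rfl⟩ := (SeminormFamily.basisSets_iff _).1 hV
  -- any m vanishing on s is in the kernel of ℓ
  have key : ∀ m : Du 𝕜 X, (∀ y ∈ s, m y = 0) → ℓ m = 0 := by
    intro m hm
    by_contra hne
    obtain ⟨t, ht⟩ := NormedField.exists_lt_norm 𝕜 (1 / ‖ℓ m‖)
    have hmem : (t • m : Du 𝕜 X) ∈ (s.sup (B.toSeminormFamily)).ball 0 r := by
      rw [Seminorm.mem_ball_zero]
      refine lt_of_le_of_lt (Seminorm.finset_sup_apply_le le_rfl ?_) hr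
      intro y hy
      have : (B.toSeminormFamily y) (t • m) = 0 := by
        simp [LinearMap.toSeminormFamily, LinearMap.toSeminorm, hm y hy, B,
          topDualPairing_apply]
      exact le_of_eq this
    have hlt := hVU hmem
    replace hlt : ‖ℓ (t • m)‖ < 1 := mem_ball_zero_iff.1 hlt
    have h1 : ℓ (t • m) = t * ℓ m := by simp
    rw [h1, norm_mul] at hlt
    have hpos : 0 < ‖ℓ m‖ := norm_pos_iff.2 hne
    have hcon : (1 / ‖ℓ m‖) * ‖ℓ m‖ < 1 :=
      lt_of_le_of_lt (le_of_lt (mul_lt_mul_of_pos_right ht hpos)) hlt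
    rw [one_div_mul_cancel hpos.ne'] at hcon
    exact lt_irrefl _ hcon
  -- the evaluation functionals on s
  let L : s → (Du 𝕜 X →ₗ[𝕜] 𝕜) := fun y => (inDu 𝕜 X (y : X)).toLinearMap
  have hker : ⨅ y : s, LinearMap.ker (L y) ≤ LinearMap.ker (ℓ.toLinearMap) := by
    intro m hmem
    simp only [Submodule.mem_iInf, LinearMap.mem_ker] at hmem ⊢
    exact key m fun y hy => hmem ⟨y, hy⟩
  have hspan := mem_span_of_iInf_ker_le_ker (L := L) hker
  rw [Submodule.mem_span_range_iff_exists_fun] at hspan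
  obtain ⟨c, hc⟩ := hspan
  refine ⟨∑ y : s, c y • (y : X), fun m => ?_⟩
  have := congrArg (fun (g : Du 𝕜 X →ₗ[𝕜] 𝕜) => g m) hc
  simp only [LinearMap.coe_sum, Finset.sum_apply, LinearMap.smul_apply] at this
  calc ℓ m = ∑ x : s, c x • (L x) m := this.symm
    _ = m (∑ y : s, c y • (y : X)) := by
        simp only [map_sum, map_smul, L]
        rfl

end


section
set_option linter.unusedSectionVars false
open NormedSpace
variable {𝕜 : Type} [RCLike 𝕜]
variable {A : Type} [NormedAddCommGroup A] [NormedSpace 𝕜 A] [CompleteSpace A]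

lemma inDu_isometry : Isometry (inDu 𝕜 A) :=
  (NormedSpace.inclusionInDoubleDualLi 𝕜 (E := A)).isometry

lemma inDu_injective : Function.Injective (inDu 𝕜 A) :=
  (inDu_isometry (𝕜 := 𝕜) (A := A)).injective

lemma inDu_norm (a : A) : ‖inDu 𝕜 A a‖ = ‖a‖ :=
  (NormedSpace.inclusionInDoubleDualLi 𝕜 (E := A)).norm_map a

/-- An element of the bidual annihilated by every functional that kills the canonical
image of `A` lies in the canonical image of `A`. -/
lemma mem_range_inDu_of_dual {k : Bi 𝕜 A}
    (h : ∀ H : Du 𝕜 (Bi 𝕜 A), (∀ a : A, H (inDu 𝕜 A a) = 0) → H k = 0) :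
    ∃ x : A, inDu 𝕜 A x = k := by
  classical
  set S : Submodule 𝕜 (Bi 𝕜 A) := LinearMap.range ((inDu 𝕜 A) : A →ₗ[𝕜] Bi 𝕜 A) with hS
  haveI hSc : IsClosed (S : Set (Bi 𝕜 A)) := by
    have : (S : Set (Bi 𝕜 A)) = Set.range (inDu 𝕜 A) := by
      ext z; simp [hS, LinearMap.mem_range, Set.mem_range]
    rw [this]
    exact (inDu_isometry (𝕜 := 𝕜) (A := A)).isClosedEmbedding.isClosed_range
  by_contra hk
  have hkS : k ∉ S := by
    intro hmem
    rcases (LinearMap.mem_range).1 hmem with ⟨x, hx⟩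
    exact hk ⟨x, hx⟩
  -- quotient by S
  have hq0 : (Submodule.Quotient.mk k : Bi 𝕜 A ⧸ S) ≠ 0 := by
    intro h0
    exact hkS ((Submodule.Quotient.mk_eq_zero S).1 h0)
  obtain ⟨g, _, hg⟩ := exists_dual_vector 𝕜 (Submodule.Quotient.mk k : Bi 𝕜 A ⧸ S) (fun h => hkS (by have h' := (QuotientAddGroup.norm_mk_eq_zero_iff_mem_closure (S := S.toAddSubgroup) (m := k)).1 h; rwa [Submodule.coe_toAddSubgroup, hSc.closure_eq] at h'))
  -- the quotient map as a continuous linear map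
  let q : Bi 𝕜 A →L[𝕜] (Bi 𝕜 A ⧸ S) :=
    S.mkQL
  have hq : ∀ z : Bi 𝕜 A, q z = Submodule.Quotient.mk z := fun z => rfl
  have hker : ∀ a : A, (g.comp q) (inDu 𝕜 A a) = 0 := by
    intro a
    have : (inDu 𝕜 A a) ∈ S := LinearMap.mem_range.2 ⟨a, rfl⟩
    simp [hq, (Submodule.Quotient.mk_eq_zero S).2 this]
  have := h (g.comp q) hker
  rw [ContinuousLinearMap.comp_apply, hq, hg] at this
  exact hkS (by have h' := (QuotientAddGroup.norm_mk_eq_zero_iff_mem_closure (S := S.toAddSubgroup) (m := k)).1 (by exact_mod_cast this); rwa [Submodule.coe_toAddSubgroup, hSc.closure_eq] at h')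

end


section St13Aux
set_option linter.unusedSectionVars false
set_option maxHeartbeats 1000000
open NormedSpace

variable {𝕜 : Type} [RCLike 𝕜]
variable {X Y Z : Type} [NormedAddCommGroup X] [NormedSpace 𝕜 X]
  [NormedAddCommGroup Y] [NormedSpace 𝕜 Y] [NormedAddCommGroup Z] [NormedSpace 𝕜 Z]

lemma adj_apply₃ (m : X →L[𝕜] Y →L[𝕜] Z) (ψ : Du 𝕜 Z) (x : X) (y : Y) :
    adj 𝕜 m ψ x y = ψ (m x y) := rfl

lemma ar1_apply (m : X →L[𝕜] Y →L[𝕜] Z) (F : Bi 𝕜 X) (G : Bi 𝕜 Y) (ψ : Du 𝕜 Z) :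
    ar1 𝕜 m F G ψ = F (adj 𝕜 (adj 𝕜 m) G ψ) := rfl

lemma adj_adj_apply (m : X →L[𝕜] Y →L[𝕜] Z) (G : Bi 𝕜 Y) (ψ : Du 𝕜 Z) (x : X) :
    adj 𝕜 (adj 𝕜 m) G ψ x = G (adj 𝕜 m ψ x) := rfl

lemma inDu_apply (x : X) (f : Du 𝕜 X) : inDu 𝕜 X x f = f x := rfl

section Alg

variable {A : Type} [NonUnitalNormedRing A] [NormedSpace 𝕜 A] [IsScalarTower 𝕜 A A]
    [SMulCommClass 𝕜 A A] [CompleteSpace A]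

local notation "μA" => ContinuousLinearMap.mul 𝕜 A
local notation "Pa" => ar1 𝕜 (ContinuousLinearMap.mul 𝕜 A)
local notation "P4" => ar1 𝕜 (ar1 𝕜 (ContinuousLinearMap.mul 𝕜 A))
local notation "ja" => inDu 𝕜 A
local notation "jd" => inDu 𝕜 (Du 𝕜 A)
local notation "jb" => inDu 𝕜 (Bi 𝕜 A)

lemma adj₁_mul (ψ : Du 𝕜 A) (a b : A) :
    adj 𝕜 μA (adj 𝕜 μA ψ a) b = adj 𝕜 μA ψ (a * b) := by
  ext c
  simp only [adj_apply₃, ContinuousLinearMap.mul_apply']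
  rw [mul_assoc]

lemma adj₂_mul (H : Bi 𝕜 A) (ψ : Du 𝕜 A) (a : A) :
    adj 𝕜 (adj 𝕜 μA) H (adj 𝕜 μA ψ a) = adj 𝕜 μA (adj 𝕜 (adj 𝕜 μA) H ψ) a := by
  ext b
  simp only [adj_adj_apply, adj_apply₃, ContinuousLinearMap.mul_apply']
  rw [← adj₁_mul]

lemma adj₂_P (G H : Bi 𝕜 A) (ψ : Du 𝕜 A) :
    adj 𝕜 (adj 𝕜 μA) (Pa G H) ψ = adj 𝕜 (adj 𝕜 μA) G (adj 𝕜 (adj 𝕜 μA) H ψ) := by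
  ext a
  simp only [adj_adj_apply, ar1_apply]
  rw [adj₂_mul]

lemma P_assoc (F G H : Bi 𝕜 A) : Pa (Pa F G) H = Pa F (Pa G H) := by
  ext ψ
  simp only [ar1_apply, adj₂_P]

lemma hat_mul (a b : A) : Pa (ja a) (ja b) = ja (a * b) := by
  ext ψ
  rfl

/-- `A` is a two-sided ideal in `A**`: `m · â` comes from `A` (left version). -/
lemma P_hat_mem
    (hid : ∀ (m : Bi 𝕜 (Bi 𝕜 A)) (c : Bi 𝕜 A),
      ar1 𝕜 (ar1 𝕜 (ContinuousLinearMap.mul 𝕜 A)) m (inDu 𝕜 (Bi 𝕜 A) c)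
          ∈ Set.range (inDu 𝕜 (Bi 𝕜 A)) ∧
      ar1 𝕜 (ar1 𝕜 (ContinuousLinearMap.mul 𝕜 A)) (inDu 𝕜 (Bi 𝕜 A) c) m
          ∈ Set.range (inDu 𝕜 (Bi 𝕜 A)))
    (m : Bi 𝕜 A) (a : A) : ∃ x : A, ja x = Pa m (ja a) := by
  classical
  -- the fourth-dual element `H ↦ m (H ∘ ja)`
  obtain ⟨w, hw⟩ := (hid (tr 𝕜 (tr 𝕜 (inDu 𝕜 A)) m) (ja a)).1
  have hwH : ∀ H : Du 𝕜 (Bi 𝕜 A), H w = m ((H.comp ja).comp ((ContinuousLinearMap.mul 𝕜 A).flip a)) := by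
    intro H
    have h1 : (jb w) H = (P4 (tr 𝕜 (tr 𝕜 ja) m) (jb (ja a))) H := by rw [hw]
    have h2 : (P4 (tr 𝕜 (tr 𝕜 ja) m) (jb (ja a))) H = (tr 𝕜 (tr 𝕜 ja) m) (adj 𝕜 (adj 𝕜 Pa) (jb (ja a)) H) :=
      ar1_apply (ar1 𝕜 (ContinuousLinearMap.mul 𝕜 A)) (tr 𝕜 (tr 𝕜 ja) m) (jb (ja a)) H
    have h3 : (tr 𝕜 (tr 𝕜 ja) m) (adj 𝕜 (adj 𝕜 Pa) (jb (ja a)) H)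
        = m ((adj 𝕜 (adj 𝕜 Pa) (jb (ja a)) H).comp ja) := rfl
    have h4 : (adj 𝕜 (adj 𝕜 Pa) (jb (ja a)) H).comp ja = (H.comp ja).comp ((ContinuousLinearMap.mul 𝕜 A).flip a) := by
      ext b
      show (adj 𝕜 (adj 𝕜 Pa) (jb (ja a)) H) (ja b) = H (ja (b * a))
      rw [adj_adj_apply]
      show (adj 𝕜 Pa H (ja b)) (ja a) = H (ja (b * a))
      rw [adj_apply₃, hat_mul]
    rw [← h4, ← h3, ← h2, ← h1]
    rfl
  have hsep : ∀ H : Du 𝕜 (Bi 𝕜 A), (∀ a' : A, H (ja a') = 0) → H w = 0 := by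
    intro H hH
    rw [hwH H]
    have : H.comp ja = 0 := by ext a'; exact hH a'
    rw [this]
    simp
  obtain ⟨x, hx⟩ := mem_range_inDu_of_dual hsep
  refine ⟨x, ?_⟩
  rw [hx]
  -- w = Pa m (ja a)
  ext ψ
  have h5 := hwH (jd ψ)
  have h6 : (jd ψ) w = w ψ := rfl
  have h7 : ((jd ψ).comp ja) = ψ := by ext b; rfl
  rw [h6, h7] at h5
  rw [h5]
  rfl


variable (hid : ∀ (m : Bi 𝕜 (Bi 𝕜 A)) (c : Bi 𝕜 A),
      ar1 𝕜 (ar1 𝕜 (ContinuousLinearMap.mul 𝕜 A)) m (inDu 𝕜 (Bi 𝕜 A) c)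
          ∈ Set.range (inDu 𝕜 (Bi 𝕜 A)) ∧
      ar1 𝕜 (ar1 𝕜 (ContinuousLinearMap.mul 𝕜 A)) (inDu 𝕜 (Bi 𝕜 A) c) m
          ∈ Set.range (inDu 𝕜 (Bi 𝕜 A)))

/-- Left multiplication by `c ∈ A**` as an operator on `A` (using that `A` is an
ideal in `A**`). -/
def Tmap (c : Bi 𝕜 A) : A →L[𝕜] A :=
  LinearMap.mkContinuous
    { toFun := fun b => Classical.choose (P_hat_mem hid c b)
      map_add' := by
        intro b b'
        apply inDu_injective (𝕜 := 𝕜) (A := A)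
        rw [map_add ja (Classical.choose (P_hat_mem hid c b))]
        rw [Classical.choose_spec (P_hat_mem hid c b),
          Classical.choose_spec (P_hat_mem hid c b'),
          Classical.choose_spec (P_hat_mem hid c (b + b')), map_add, map_add]
      map_smul' := by
        intro t b
        apply inDu_injective (𝕜 := 𝕜) (A := A)
        rw [RingHom.id_apply, map_smul ja t (Classical.choose (P_hat_mem hid c b))]
        rw [Classical.choose_spec (P_hat_mem hid c b),
          Classical.choose_spec (P_hat_mem hid c (t • b)), map_smul, map_smul] }
    ‖Pa c‖
    (by
      intro b
      have h1 : ja (Classical.choose (P_hat_mem hid c b)) = Pa c (ja b) :=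
        Classical.choose_spec (P_hat_mem hid c b)
      have h2 : ‖Classical.choose (P_hat_mem hid c b)‖ = ‖Pa c (ja b)‖ := by
        rw [← inDu_norm (𝕜 := 𝕜) (Classical.choose (P_hat_mem hid c b)), h1]
      show ‖Classical.choose (P_hat_mem hid c b)‖ ≤ ‖Pa c‖ * ‖b‖
      rw [h2, ← inDu_norm (𝕜 := 𝕜) b]
      exact (Pa c).le_opNorm (ja b))

lemma ja_Tmap (c : Bi 𝕜 A) (b : A) : ja (Tmap hid c b) = Pa c (ja b) :=
  Classical.choose_spec (P_hat_mem hid c b)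

include hid

/-- Key consequence of `A**` being an ideal in the fourth dual: the functional
`ψ ↦ n (ψ ∘ T_c)` is an evaluation at a point of `A`. -/
lemma lemT (c n : Bi 𝕜 A) :
    ∃ x : A, ∀ ψ : Du 𝕜 A, ψ x = n (ψ.comp (Tmap hid c)) := by
  classical
  obtain ⟨w, hw⟩ := (hid (tr 𝕜 (tr 𝕜 (inDu 𝕜 A)) n) c).2
  have hwH : ∀ H : Du 𝕜 (Bi 𝕜 A), H w = n ((H.comp ja).comp (Tmap hid c)) := by
    intro H
    have h1 : (jb w) H = (P4 (jb c) (tr 𝕜 (tr 𝕜 ja) n)) H := by rw [hw]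
    have h2 : (P4 (jb c) (tr 𝕜 (tr 𝕜 ja) n)) H
        = (jb c) (adj 𝕜 (adj 𝕜 Pa) (tr 𝕜 (tr 𝕜 ja) n) H) :=
      ar1_apply (ar1 𝕜 (ContinuousLinearMap.mul 𝕜 A)) (jb c) (tr 𝕜 (tr 𝕜 ja) n) H
    have h3 : (jb c) (adj 𝕜 (adj 𝕜 Pa) (tr 𝕜 (tr 𝕜 ja) n) H)
        = (tr 𝕜 (tr 𝕜 ja) n) (adj 𝕜 Pa H c) := rfl
    have h4 : (tr 𝕜 (tr 𝕜 ja) n) (adj 𝕜 Pa H c) = n ((adj 𝕜 Pa H c).comp ja) := rfl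
    have h5 : (adj 𝕜 Pa H c).comp ja = (H.comp ja).comp (Tmap hid c) := by
      ext b
      show (adj 𝕜 Pa H c) (ja b) = H (ja (Tmap hid c b))
      rw [adj_apply₃, ja_Tmap]
    rw [← h5, ← h4, ← h3, ← h2, ← h1]
    rfl
  have hsep : ∀ H : Du 𝕜 (Bi 𝕜 A), (∀ a' : A, H (ja a') = 0) → H w = 0 := by
    intro H hH
    rw [hwH H]
    have : H.comp ja = 0 := by ext a'; exact hH a'
    rw [this]
    simp
  obtain ⟨x, hx⟩ := mem_range_inDu_of_dual hsep
  refine ⟨x, fun ψ => ?_⟩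
  have h6 := hwH (jd ψ)
  have h7 : (jd ψ) w = w ψ := rfl
  have h8 : ((jd ψ).comp ja) = ψ := by ext b; rfl
  rw [h7, h8] at h6
  rw [← hx] at h6
  exact h6

variable (hfa : ∀ f : Du 𝕜 (Bi 𝕜 A),
      (∃ (g : Du 𝕜 (Bi 𝕜 A)) (c : Bi 𝕜 A),
        f = g.comp (ar1 𝕜 (ContinuousLinearMap.mul 𝕜 A) c)) ∧
      (∃ (c : Bi 𝕜 A) (g : Du 𝕜 (Bi 𝕜 A)),
        f = g.comp ((ar1 𝕜 (ContinuousLinearMap.mul 𝕜 A)).flip c)))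

include hfa

/-- The exchange lemma: for every `φ ∈ A*` and `n ∈ A**`, the functional
`m ↦ n (m ∙ φ)` on `A**` is weak-star continuous (an evaluation). -/
lemma xi_lemma (φ : Du 𝕜 A) (n : Bi 𝕜 A) :
    ∃ ξ : Du 𝕜 A, ∀ m : Bi 𝕜 A, n (adj 𝕜 (adj 𝕜 μA) m φ) = m ξ := by
  classical
  obtain ⟨g, c₁, hg⟩ := (hfa (jd φ)).1
  have hgp : ∀ k : Bi 𝕜 A, k φ = g (Pa c₁ k) := by
    intro k
    have : (jd φ) k = (g.comp (ar1 𝕜 (ContinuousLinearMap.mul 𝕜 A) c₁)) k := by rw [← hg]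
    exact this
  have claimA : ∀ a : A, adj 𝕜 μA φ a = adj 𝕜 μA (g.comp ja) (Tmap hid c₁ a) := by
    intro a
    ext b
    rw [adj_apply₃, adj_apply₃]
    show φ (a * b) = g (ja (Tmap hid c₁ a * b))
    rw [← hat_mul, ja_Tmap, P_assoc, hat_mul, ← hgp (ja (a * b))]
    rfl
  have claimB : ∀ m : Bi 𝕜 A,
      adj 𝕜 (adj 𝕜 μA) m φ = (adj 𝕜 (adj 𝕜 μA) m (g.comp ja)).comp (Tmap hid c₁) := by
    intro m
    ext a
    rw [adj_adj_apply, claimA a]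
    rfl
  obtain ⟨x, hx⟩ := lemT hid c₁ n
  refine ⟨adj 𝕜 μA (g.comp ja) x, fun m => ?_⟩
  rw [claimB m, ← hx (adj 𝕜 (adj 𝕜 μA) m (g.comp ja))]
  rfl

/-- Products `c * n` in `A**` (first Arens) actually lie in the image of `A`. -/
lemma P_mem_hat (c n : Bi 𝕜 A) :
    ∃ x : A, ja x = Pa c n ∧ ∀ ψ : Du 𝕜 A, ψ x = n (ψ.comp (Tmap hid c)) := by
  classical
  obtain ⟨x, hx⟩ := lemT hid c n
  refine ⟨x, ?_, hx⟩
  ext ψ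
  have h1 : (ja x) ψ = ψ x := rfl
  rw [h1, hx ψ]
  have h2 : (Pa c n) ψ = c (adj 𝕜 (adj 𝕜 μA) n ψ) :=
    ar1_apply (ContinuousLinearMap.mul 𝕜 A) c n ψ
  obtain ⟨ξ, hξ⟩ := xi_lemma hid hfa ψ c
  have h3 : ξ = ψ.comp (Tmap hid c) := by
    ext a
    have h4 : (ja a) ξ = ξ a := rfl
    rw [← h4, ← hξ (ja a)]
    show c (adj 𝕜 (adj 𝕜 μA) (ja a) ψ) = ψ (Tmap hid c a)
    have h5 : adj 𝕜 (adj 𝕜 μA) (ja a) ψ = ψ.comp ((ContinuousLinearMap.mul 𝕜 A).flip a) := by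
      ext b
      rfl
    rw [h5]
    have h6 : ψ (Tmap hid c a) = (ja (Tmap hid c a)) ψ := rfl
    rw [h6, ja_Tmap]
    rfl
  rw [h2, hξ n, h3]

end Alg
end St13Aux


set_option maxHeartbeats 4000000 in
/-- Let `A` be a Banach algebra such that `A**` is a two-sided ideal in `A^{(4)}` and
`A***` factors as a Banach `A**`-bimodule.  If `A` is weakly amenable, then
`H^1_{w*}(A**, A***) = {0}`. -/
theorem statement13 {𝕜 : Type} [RCLike 𝕜] {A : Type}
    [NonUnitalNormedRing A] [NormedSpace 𝕜 A] [IsScalarTower 𝕜 A A]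
    [SMulCommClass 𝕜 A A] [CompleteSpace A]
    -- `A**` is a two-sided ideal in `A^{(4)}`
    (hideal : ∀ (m : Bi 𝕜 (Bi 𝕜 A)) (c : Bi 𝕜 A),
      ar1 𝕜 (ar1 𝕜 (ContinuousLinearMap.mul 𝕜 A)) m (inDu 𝕜 (Bi 𝕜 A) c)
          ∈ Set.range (inDu 𝕜 (Bi 𝕜 A)) ∧
      ar1 𝕜 (ar1 𝕜 (ContinuousLinearMap.mul 𝕜 A)) (inDu 𝕜 (Bi 𝕜 A) c) m
          ∈ Set.range (inDu 𝕜 (Bi 𝕜 A)))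
    -- `A***` factors: `A*** = A***·A** = A**·A***`
    (hfac : ∀ f : Du 𝕜 (Bi 𝕜 A),
      (∃ (g : Du 𝕜 (Bi 𝕜 A)) (c : Bi 𝕜 A),
        f = g.comp (ar1 𝕜 (ContinuousLinearMap.mul 𝕜 A) c)) ∧
      (∃ (c : Bi 𝕜 A) (g : Du 𝕜 (Bi 𝕜 A)),
        f = g.comp ((ar1 𝕜 (ContinuousLinearMap.mul 𝕜 A)).flip c)))
    -- `A` is weakly amenable
    (hwa : WeaklyAmenable 𝕜 A) :
    -- `H^1_{w*}(A**, A***) = {0}`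
    ∀ D : Bi 𝕜 A →L[𝕜] Du 𝕜 (Bi 𝕜 A),
      IsDer 𝕜 (fun m n => ar1 𝕜 (ContinuousLinearMap.mul 𝕜 A) m n)
        (fun (m : Bi 𝕜 A) (F : Du 𝕜 (Bi 𝕜 A)) =>
          F.comp ((ar1 𝕜 (ContinuousLinearMap.mul 𝕜 A)).flip m))
        (fun (F : Du 𝕜 (Bi 𝕜 A)) (m : Bi 𝕜 A) =>
          F.comp (ar1 𝕜 (ContinuousLinearMap.mul 𝕜 A) m)) D →
      WStarCont 𝕜 (fun m => D m) →
      IsInner 𝕜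
        (fun (m : Bi 𝕜 A) (F : Du 𝕜 (Bi 𝕜 A)) =>
          F.comp ((ar1 𝕜 (ContinuousLinearMap.mul 𝕜 A)).flip m))
        (fun (F : Du 𝕜 (Bi 𝕜 A)) (m : Bi 𝕜 A) =>
          F.comp (ar1 𝕜 (ContinuousLinearMap.mul 𝕜 A) m)) D := by
  classical
  intro D hder hwc
  -- Step 1: weak-star representation of `D` through the predual.
  have hS : ∀ n : Bi 𝕜 A, ∃ Sn : Du 𝕜 A, ∀ m : Bi 𝕜 A, D m n = m Sn := by
    intro n
    have h1 : Continuous fun x : WeakDual 𝕜 (Bi 𝕜 A) => x n :=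
      WeakBilin.eval_continuous _ n
    have hcont : Continuous fun m : WeakDual 𝕜 (Du 𝕜 A) =>
        ((inDu 𝕜 (Bi 𝕜 A) n).comp D) m := h1.comp hwc
    exact exists_eval ((inDu 𝕜 (Bi 𝕜 A) n).comp D) hcont
  choose S hSp using hS
  -- Step 2: the restriction of `D` to `A` is a derivation `A → A*`.
  have hder' : IsDer 𝕜 (fun a b : A => a * b)
      (fun a f => f.comp ((ContinuousLinearMap.mul 𝕜 A).flip a))
      (fun f a => f.comp (ContinuousLinearMap.mul 𝕜 A a))
      ((tr 𝕜 (inDu 𝕜 A)).comp (D.comp (inDu 𝕜 A))) := by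
    intro a b
    ext c
    have h0 : ((tr 𝕜 (inDu 𝕜 A)).comp (D.comp (inDu 𝕜 A))) (a * b) c
        = D (inDu 𝕜 A (a * b)) (inDu 𝕜 A c) := rfl
    rw [h0, ← hat_mul, hder (inDu 𝕜 A a) (inDu 𝕜 A b)]
    have h1 : (D (inDu 𝕜 A b)).comp ((ar1 𝕜 (ContinuousLinearMap.mul 𝕜 A)).flip (inDu 𝕜 A a))
          (inDu 𝕜 A c)
        = D (inDu 𝕜 A b) (ar1 𝕜 (ContinuousLinearMap.mul 𝕜 A) (inDu 𝕜 A c) (inDu 𝕜 A a)) := rfl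
    have h2 : (D (inDu 𝕜 A a)).comp (ar1 𝕜 (ContinuousLinearMap.mul 𝕜 A) (inDu 𝕜 A b))
          (inDu 𝕜 A c)
        = D (inDu 𝕜 A a) (ar1 𝕜 (ContinuousLinearMap.mul 𝕜 A) (inDu 𝕜 A b) (inDu 𝕜 A c)) := rfl
    rw [ContinuousLinearMap.add_apply, h1, h2, hat_mul, hat_mul]
    rfl
  obtain ⟨f, hf⟩ := hwa ((tr 𝕜 (inDu 𝕜 A)).comp (D.comp (inDu 𝕜 A))) hder'
  have hfp : ∀ a c : A, D (inDu 𝕜 A a) (inDu 𝕜 A c) = f (c * a) - f (a * c) := by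
    intro a c
    have h3 := congrArg (fun u : Du 𝕜 A => u c) (hf a)
    simp at h3
    exact h3
  -- Step 3: the witness is the canonical image of `f` in `A***`.
  refine ⟨inDu 𝕜 (Du 𝕜 A) f, ?_⟩
  intro m
  ext n
  -- the exchange functional for `(f, n)`
  obtain ⟨ξ, hξ⟩ := xi_lemma hideal hfac f n
  have e1 : ∀ m' : Bi 𝕜 A, ar1 𝕜 (ContinuousLinearMap.mul 𝕜 A) n m' f = m' ξ := by
    intro m'
    rw [ar1_apply]
    exact hξ m'
  have e2 : ∀ m' : Bi 𝕜 A, ar1 𝕜 (ContinuousLinearMap.mul 𝕜 A) m' n f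
      = m' (adj 𝕜 (adj 𝕜 (ContinuousLinearMap.mul 𝕜 A)) n f) := by
    intro m'
    exact ar1_apply (ContinuousLinearMap.mul 𝕜 A) m' n f
  have hGm : ∀ m' : Bi 𝕜 A,
      D m' n - ar1 𝕜 (ContinuousLinearMap.mul 𝕜 A) n m' f
        + ar1 𝕜 (ContinuousLinearMap.mul 𝕜 A) m' n f
      = m' (S n - ξ + adj 𝕜 (adj 𝕜 (ContinuousLinearMap.mul 𝕜 A)) n f) := by
    intro m'
    rw [hSp n m', e1 m', e2 m', map_add, map_sub]
  -- Step 4: the difference derivation kills the image of `A`.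
  have hEb : ∀ b : A, ∀ n' : Bi 𝕜 A,
      D (inDu 𝕜 A b) n' - ar1 𝕜 (ContinuousLinearMap.mul 𝕜 A) n' (inDu 𝕜 A b) f
        + ar1 𝕜 (ContinuousLinearMap.mul 𝕜 A) (inDu 𝕜 A b) n' f = 0 := by
    intro b
    -- package as a continuous linear functional on `A**`
    have hEbap : ∀ n' : Bi 𝕜 A,
        (D (inDu 𝕜 A b)
          - (inDu 𝕜 (Du 𝕜 A) f).comp ((ar1 𝕜 (ContinuousLinearMap.mul 𝕜 A)).flip (inDu 𝕜 A b))
          + (inDu 𝕜 (Du 𝕜 A) f).comp (ar1 𝕜 (ContinuousLinearMap.mul 𝕜 A) (inDu 𝕜 A b))) n'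
        = D (inDu 𝕜 A b) n' - ar1 𝕜 (ContinuousLinearMap.mul 𝕜 A) n' (inDu 𝕜 A b) f
          + ar1 𝕜 (ContinuousLinearMap.mul 𝕜 A) (inDu 𝕜 A b) n' f := by
      intro n'
      rfl
    have hEbA : ∀ c : A,
        (D (inDu 𝕜 A b)
          - (inDu 𝕜 (Du 𝕜 A) f).comp ((ar1 𝕜 (ContinuousLinearMap.mul 𝕜 A)).flip (inDu 𝕜 A b))
          + (inDu 𝕜 (Du 𝕜 A) f).comp (ar1 𝕜 (ContinuousLinearMap.mul 𝕜 A) (inDu 𝕜 A b)))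
          (inDu 𝕜 A c) = 0 := by
      intro c
      rw [hEbap]
      have h4 : ar1 𝕜 (ContinuousLinearMap.mul 𝕜 A) (inDu 𝕜 A c) (inDu 𝕜 A b) f = f (c * b) := by
        rw [hat_mul]; rfl
      have h5 : ar1 𝕜 (ContinuousLinearMap.mul 𝕜 A) (inDu 𝕜 A b) (inDu 𝕜 A c) f = f (b * c) := by
        rw [hat_mul]; rfl
      rw [h4, h5, hfp b c]
      ring
    obtain ⟨g₂, c₀, hg₂⟩ := (hfac
      (D (inDu 𝕜 A b)
        - (inDu 𝕜 (Du 𝕜 A) f).comp ((ar1 𝕜 (ContinuousLinearMap.mul 𝕜 A)).flip (inDu 𝕜 A b))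
        + (inDu 𝕜 (Du 𝕜 A) f).comp (ar1 𝕜 (ContinuousLinearMap.mul 𝕜 A) (inDu 𝕜 A b)))).1
    have hg₂p : ∀ k : Bi 𝕜 A,
        (D (inDu 𝕜 A b)
          - (inDu 𝕜 (Du 𝕜 A) f).comp ((ar1 𝕜 (ContinuousLinearMap.mul 𝕜 A)).flip (inDu 𝕜 A b))
          + (inDu 𝕜 (Du 𝕜 A) f).comp (ar1 𝕜 (ContinuousLinearMap.mul 𝕜 A) (inDu 𝕜 A b))) k
        = g₂ (ar1 𝕜 (ContinuousLinearMap.mul 𝕜 A) c₀ k) := by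
      intro k
      rw [hg₂]
      rfl
    have hχT : (g₂.comp (inDu 𝕜 A)).comp (Tmap hideal c₀) = 0 := by
      ext a
      have h6 : ((g₂.comp (inDu 𝕜 A)).comp (Tmap hideal c₀)) a
          = g₂ (inDu 𝕜 A (Tmap hideal c₀ a)) := rfl
      rw [h6, ja_Tmap, ← hg₂p (inDu 𝕜 A a), hEbA a]
      rfl
    intro n'
    rw [← hEbap n', hg₂p n']
    obtain ⟨x, hx1, hx2⟩ := P_mem_hat hideal hfac c₀ n'
    rw [← hx1]
    have h7 : g₂ (inDu 𝕜 A x) = (g₂.comp (inDu 𝕜 A)) x := rfl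
    rw [h7, hx2 (g₂.comp (inDu 𝕜 A)), show (g₂.comp (inDu 𝕜 A)).comp (Tmap hideal c₀)
        = (0 : Du 𝕜 A) from hχT]
    simp
  -- Step 5: conclude.
  have hG0 : S n - ξ + adj 𝕜 (adj 𝕜 (ContinuousLinearMap.mul 𝕜 A)) n f = 0 := by
    ext b
    have h8 := hGm (inDu 𝕜 A b)
    rw [hEb b n] at h8
    have h9 : inDu 𝕜 A b (S n - ξ + adj 𝕜 (adj 𝕜 (ContinuousLinearMap.mul 𝕜 A)) n f)
        = (S n - ξ + adj 𝕜 (adj 𝕜 (ContinuousLinearMap.mul 𝕜 A)) n f) b := rfl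
    rw [h9] at h8
    simpa using h8.symm
  have h10 := hGm m
  rw [hG0, map_zero] at h10
  have h11 : D m n = ar1 𝕜 (ContinuousLinearMap.mul 𝕜 A) n m f
      - ar1 𝕜 (ContinuousLinearMap.mul 𝕜 A) m n f := by linear_combination h10
  have h12 : ((inDu 𝕜 (Du 𝕜 A) f).comp ((ar1 𝕜 (ContinuousLinearMap.mul 𝕜 A)).flip m)) n
      = ar1 𝕜 (ContinuousLinearMap.mul 𝕜 A) n m f := rfl
  have h13 : ((inDu 𝕜 (Du 𝕜 A) f).comp (ar1 𝕜 (ContinuousLinearMap.mul 𝕜 A) m)) n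
      = ar1 𝕜 (ContinuousLinearMap.mul 𝕜 A) m n f := rfl
  rw [ContinuousLinearMap.sub_apply, h12, h13]
  exact h11

end ArensPaper
end
end
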